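/- arXiv:1804.00794 — 9 statements merged into one kernel-verified Lean document; each statement's English description precedes it below -/
import Mathlib

section
/- Alternation. Let (W,b) be a competitive nondegenerate TLN on n neurons. If σ ⊆ [n] and k ∉ σ are such that both σ ∈ FP(W,b) and σ ∪ {k} ∈ FP(W,b), then sgn det(I − W_{σ∪{k}}) = −sgn det(I − W_σ). -/
open Matrix Finset

/-- `x` is a fixed point of the TLN `(W, b)` restricted to the subset `τ` of neurons
(coordinates outside `τ` are held at zero): for `i ∈ τ`,
`x i = [∑_{j ∈ τ} W i j * x j + b i]_+`. -/
def IsRestFixedPoint {n : ℕ} (W : Matrix (Fin n) (Fin n) ℝ) (b : Fin n → ℝ)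
    (τ : Finset (Fin n)) (x : Fin n → ℝ) : Prop :=
  (∀ i ∈ τ, x i = max 0 (∑ j ∈ τ, W i j * x j + b i)) ∧ ∀ i ∉ τ, x i = 0

/-- `σ ∈ FP(W_τ, b_τ)` : `σ` is the support of a fixed point of the restriction
of the TLN `(W, b)` to `τ`. -/
def memFP {n : ℕ} (W : Matrix (Fin n) (Fin n) ℝ) (b : Fin n → ℝ)
    (τ σ : Finset (Fin n)) : Prop :=
  ∃ x : Fin n → ℝ, IsRestFixedPoint W b τ x ∧ ∀ i, 0 < x i ↔ i ∈ σ

/-- `det (I - W_σ)`, the determinant of the principal submatrix on `σ`. -/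
noncomputable def detIW {n : ℕ} (W : Matrix (Fin n) (Fin n) ℝ) (σ : Finset (Fin n)) : ℝ :=
  ((1 : Matrix {x // x ∈ σ} {x // x ∈ σ} ℝ) - W.submatrix Subtype.val Subtype.val).det

/-- The Cramer determinant `s_i^σ := det ((I − W_{σ∪{i}})_i ; b_{σ∪{i}})`:
the matrix `I − W` restricted to `σ ∪ {i}`, with the column indexed by `i`
replaced by `b` restricted to `σ ∪ {i}`. -/
noncomputable def cramerDet {n : ℕ} (W : Matrix (Fin n) (Fin n) ℝ) (b : Fin n → ℝ)
    (σ : Finset (Fin n)) (i : Fin n) : ℝ :=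
  (Matrix.updateCol
      ((1 : Matrix {x // x ∈ insert i σ} {x // x ∈ insert i σ} ℝ)
        - W.submatrix Subtype.val Subtype.val)
      ⟨i, Finset.mem_insert_self i σ⟩ (fun p => b p.val)).det

/-- The TLN `(W, b)` is competitive. -/
def Competitive {n : ℕ} (W : Matrix (Fin n) (Fin n) ℝ) (b : Fin n → ℝ) : Prop :=
  (∀ i j, W i j ≤ 0) ∧ (∀ i, W i i = 0) ∧ (∀ i, 0 ≤ b i)

/-- The TLN `(W, b)` is nondegenerate. -/
def Nondegenerate {n : ℕ} (W : Matrix (Fin n) (Fin n) ℝ) (b : Fin n → ℝ) : Prop :=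
  (∃ i, 0 < b i) ∧ (∀ σ : Finset (Fin n), detIW W σ ≠ 0) ∧
  (∀ σ : Finset (Fin n), (∀ i ∈ σ, 0 < b i) → ∀ i ∈ σ, cramerDet W b σ i ≠ 0)

/-- The CTLN connectivity matrix of the simple directed graph `G`
(here `G j i` means there is an edge `j → i` in `G`). -/
def ctlnW {n : ℕ} (G : Fin n → Fin n → Prop) [DecidableRel G] (ε δ : ℝ) :
    Matrix (Fin n) (Fin n) ℝ :=
  Matrix.of fun i j => if i = j then 0 else if G j i then -1 + ε else -1 - δ

/-- `k` graphically dominates `j` with respect to `σ`, in the directed graph `G`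
(where `G a b` means there is an edge `a → b`). -/
def GraphDominates {α : Type*} (G : α → α → Prop) (σ : Finset α) (k j : α) : Prop :=
  (j ∈ σ ∨ k ∈ σ) ∧
  (∀ i ∈ σ, i ≠ j → i ≠ k → G i j → G i k) ∧
  (j ∈ σ → G j k) ∧ (k ∈ σ → ¬ G k j)

/-- `w_j^σ := ∑_{i ∈ σ} (−I + W)_{j i} · |s_i^σ|`. -/
noncomputable def wval {n : ℕ} (W : Matrix (Fin n) (Fin n) ℝ) (b : Fin n → ℝ)
    (σ : Finset (Fin n)) (j : Fin n) : ℝ :=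
  ∑ i ∈ σ, (W j i - if j = i then 1 else 0) * |cramerDet W b σ i|

private lemma cramer_mulVec_self' {m : Type*} [DecidableEq m] [Fintype m]
    (A : Matrix m m ℝ) (x : m → ℝ) : Matrix.cramer A (A *ᵥ x) = A.det • x := by
  rw [cramer_eq_adjugate_mulVec, mulVec_mulVec, adjugate_mul, smul_mulVec, one_mulVec]

private lemma eq_of_max_pos' {t v : ℝ} (h : v = max 0 t) (hv : 0 < v) : v = t := by
  rcases le_or_gt t 0 with h' | h'
  · rw [max_eq_left h'] at h; linarith
  · rwa [max_eq_right h'.le] at h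

private lemma minor_det' {n : ℕ} (W : Matrix (Fin n) (Fin n) ℝ) (σ : Finset (Fin n))
    (k : Fin n) (hk : k ∉ σ) :
    (Matrix.updateCol
      ((1 : Matrix {v // v ∈ insert k σ} {v // v ∈ insert k σ} ℝ)
        - W.submatrix Subtype.val Subtype.val)
      ⟨k, Finset.mem_insert_self k σ⟩
      (Pi.single ⟨k, Finset.mem_insert_self k σ⟩ 1)).det = detIW W σ := by
  classical
  set kk : {v // v ∈ insert k σ} := ⟨k, Finset.mem_insert_self k σ⟩ with hkk
  set B := Matrix.updateCol
      ((1 : Matrix {v // v ∈ insert k σ} {v // v ∈ insert k σ} ℝ)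
        - W.submatrix Subtype.val Subtype.val) kk (Pi.single kk 1) with hB
  have hne : ∀ q : {v // v ∈ σ},
      (⟨q.val, Finset.mem_insert_of_mem q.2⟩ : {v // v ∈ insert k σ}) ≠ kk := by
    intro q h
    have hv : q.val = k := Subtype.ext_iff.mp h
    exact hk (hv ▸ q.2)
  let e : {v // v ∈ σ} ⊕ Unit ≃ {v // v ∈ insert k σ} :=
  { toFun := Sum.elim (fun p => ⟨p.val, Finset.mem_insert_of_mem p.2⟩) (fun _ => kk)
    invFun := fun q => if h : q.val ∈ σ then Sum.inl ⟨q.val, h⟩ else Sum.inr ()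
    left_inv := by
      rintro (p | ⟨⟩)
      · simp [p.2]
      · simp [hkk, hk]
    right_inv := by
      intro q
      by_cases h : q.val ∈ σ
      · simp [h]
      · have hq : q.val = k := by
          rcases Finset.mem_insert.mp q.2 with h' | h'
          · exact h'
          · exact absurd h' h
        simp only [h, dif_neg, not_false_iff, Sum.elim_inr]
        exact Subtype.ext hq.symm }
  rw [← Matrix.det_submatrix_equiv_self e B]
  have hblock : B.submatrix e e = Matrix.fromBlocks
      ((1 : Matrix {v // v ∈ σ} {v // v ∈ σ} ℝ) - W.submatrix Subtype.val Subtype.val)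
      0 (Matrix.of fun (_ : Unit) (q : {v // v ∈ σ}) => -W k q.val) 1 := by
    ext p q
    cases p with
    | inl p =>
      cases q with
      | inl q =>
        have : e (Sum.inl q) ≠ kk := hne q
        simp only [Matrix.submatrix_apply, hB, Matrix.updateCol_apply, if_neg this,
          Matrix.fromBlocks_apply₁₁, Matrix.sub_apply, Matrix.one_apply,
          Matrix.submatrix_apply]
        have hWeq : W ((e (Sum.inl p)) : Fin n) ((e (Sum.inl q)) : Fin n) = W p.val q.val := rfl
        rw [hWeq]
        congr 1
        by_cases hpq : p = q
        · subst hpq; simp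
        · have hne2 : e (Sum.inl p) ≠ e (Sum.inl q) := by
            intro h
            have hv := congrArg Subtype.val h
            exact hpq (Subtype.ext hv)
          rw [if_neg hne2, if_neg hpq]
      | inr q =>
        have h1 : e (Sum.inr q) = kk := rfl
        have h2 : e (Sum.inl p) ≠ kk := hne p
        simp only [Matrix.submatrix_apply, hB, Matrix.updateCol_apply, h1, if_pos rfl,
          Matrix.fromBlocks_apply₁₂, Matrix.zero_apply]
        exact Pi.single_eq_of_ne h2 1
    | inr p =>
      cases q with
      | inl q =>
        have h2 : e (Sum.inl q) ≠ kk := hne q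
        have h3 : kk ≠ e (Sum.inl q) := fun h => h2 h.symm
        simp only [Matrix.submatrix_apply, hB, Matrix.updateCol_apply, if_neg h2,
          Matrix.fromBlocks_apply₂₁, Matrix.of_apply, Matrix.sub_apply, Matrix.one_apply,
          Matrix.submatrix_apply]
        rw [if_neg (show e (Sum.inr p) ≠ e (Sum.inl q) from fun h => h2 h.symm)]
        show (0 : ℝ) - W k q.val = -W k q.val
        ring
      | inr q =>
        have h1 : e (Sum.inr q) = kk := rfl
        simp only [Matrix.submatrix_apply, hB, Matrix.updateCol_apply, h1, if_pos rfl,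
          Matrix.fromBlocks_apply₂₂]
        simp [Pi.single_eq_same]
    -- done
  rw [hblock, Matrix.det_fromBlocks_zero₁₂]
  simp [detIW]

/-- **Alternation.** For a competitive nondegenerate TLN `(W, b)`: if both `σ` and
`σ ∪ {k}` (with `k ∉ σ`) are fixed point supports of `(W, b)`, then
`sgn det(I − W_{σ∪{k}}) = − sgn det(I − W_σ)`. -/
theorem alternation {n : ℕ} (W : Matrix (Fin n) (Fin n) ℝ) (b : Fin n → ℝ)
    (hW : Competitive W b) (hnd : Nondegenerate W b)
    (σ : Finset (Fin n)) (k : Fin n) (hk : k ∉ σ)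
    (h1 : memFP W b Finset.univ σ) (h2 : memFP W b Finset.univ (insert k σ)) :
    Real.sign (detIW W (insert k σ)) = - Real.sign (detIW W σ) := by
  classical
  obtain ⟨x, ⟨hxf, -⟩, hxs⟩ := h1
  obtain ⟨y, ⟨hyf, -⟩, hys⟩ := h2
  set τ : Finset (Fin n) := insert k σ with hτ
  have hx0 : ∀ j, j ∉ σ → x j = 0 := by
    intro j hj
    have hmax := hxf j (Finset.mem_univ j)
    have hle : x j ≤ 0 := not_lt.mp (fun h => hj ((hxs j).1 h))
    have hge : 0 ≤ x j := hmax ▸ le_max_left 0 _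
    linarith
  have hxeq : ∀ i ∈ σ, x i = (∑ j, W i j * x j) + b i := by
    intro i hi
    exact eq_of_max_pos' (hxf i (Finset.mem_univ i)) ((hxs i).2 hi)
  set θ : ℝ := (∑ j, W k j * x j) + b k with hθdef
  have hθ : θ ≤ 0 := by
    have hmax := hxf k (Finset.mem_univ k)
    rw [hx0 k hk] at hmax
    calc θ ≤ max 0 θ := le_max_right 0 θ
    _ = 0 := hmax.symm
  have hy0 : ∀ j, j ∉ τ → y j = 0 := by
    intro j hj
    have hmax := hyf j (Finset.mem_univ j)
    have hle : y j ≤ 0 := not_lt.mp (fun h => hj ((hys j).1 h))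
    have hge : 0 ≤ y j := hmax ▸ le_max_left 0 _
    linarith
  have hyeq : ∀ i ∈ τ, y i = (∑ j, W i j * y j) + b i := by
    intro i hi
    exact eq_of_max_pos' (hyf i (Finset.mem_univ i)) ((hys i).2 hi)
  set A : Matrix {v // v ∈ τ} {v // v ∈ τ} ℝ :=
    (1 : Matrix {v // v ∈ τ} {v // v ∈ τ} ℝ) - W.submatrix Subtype.val Subtype.val with hA
  set kk : {v // v ∈ τ} := ⟨k, Finset.mem_insert_self k σ⟩ with hkk
  have hsum : ∀ (z : Fin n → ℝ), (∀ j, j ∉ τ → z j = 0) → ∀ p : Fin n,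
      (∑ q : {v // v ∈ τ}, W p q.val * z q.val) = ∑ j, W p j * z j := by
    intro z hz p
    rw [Finset.sum_coe_sort τ (fun j => W p j * z j)]
    exact Finset.sum_subset (Finset.subset_univ τ)
      (fun j _ hj => by rw [hz j hj, mul_zero])
  have hmv : ∀ (z : Fin n → ℝ), (∀ j, j ∉ τ → z j = 0) → ∀ p : {v // v ∈ τ},
      (A *ᵥ fun q => z q.val) p = z p.val - ∑ j, W p.val j * z j := by
    intro z hz p
    simp only [hA, Matrix.mulVec, dotProduct, Matrix.sub_apply, Matrix.one_apply,
      Matrix.submatrix_apply, sub_mul, Finset.sum_sub_distrib]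
    rw [hsum z hz p.val]
    congr 1
    simp [ite_mul]
  have hxτ0 : ∀ j, j ∉ τ → x j = 0 := fun j hj =>
    hx0 j (fun hh => hj (Finset.mem_insert_of_mem hh))
  have hAy : (A *ᵥ fun q : {v // v ∈ τ} => y q.val) = fun p => b p.val := by
    funext p
    rw [hmv y hy0 p]
    have := hyeq p.val p.2
    linarith
  have hAx : (fun p : {v // v ∈ τ} => b p.val) =
      (A *ᵥ fun q => x q.val) + θ • (Pi.single kk 1 : {v // v ∈ τ} → ℝ) := by
    funext p
    rw [Pi.add_apply, Pi.smul_apply, hmv x hxτ0 p]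
    by_cases hp : p = kk
    · subst hp
      rw [Pi.single_eq_same]
      have hxk : x k = 0 := hx0 k hk
      show b k = x k - (∑ j, W k j * x j) + θ * 1
      rw [hxk, hθdef]; ring
    · have hpv : p.val ∈ σ := by
        rcases Finset.mem_insert.mp p.2 with h | h
        · exact absurd (Subtype.ext h) hp
        · exact h
      rw [Pi.single_eq_of_ne hp 1]
      have := hxeq p.val hpv
      simp only [smul_eq_mul, mul_zero]
      linarith
  have e1 : Matrix.cramer A (fun p => b p.val) kk = A.det * y k := by
    rw [← hAy, cramer_mulVec_self']
    rfl
  have e2 : Matrix.cramer A (fun p => b p.val) kk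
      = θ * (A.updateCol kk (Pi.single kk 1)).det := by
    rw [hAx, map_add, LinearMap.map_smul, cramer_mulVec_self']
    have hxk : x k = 0 := hx0 k hk
    rw [Pi.add_apply, Pi.smul_apply, Pi.smul_apply, smul_eq_mul, smul_eq_mul]
    rw [Matrix.cramer_apply]
    show A.det * x k + θ * _ = _
    rw [hxk]; ring
  have e3 : (A.updateCol kk (Pi.single kk 1)).det = detIW W σ :=
    minor_det' W σ k hk
  have hdetA : A.det = detIW W τ := rfl
  have key : detIW W τ * y k = θ * detIW W σ := by
    rw [← hdetA, ← e3, ← e2, e1]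
  have hdets : detIW W σ ≠ 0 := hnd.2.1 σ
  have hdetA0 : detIW W τ ≠ 0 := hnd.2.1 τ
  have hyk : 0 < y k := (hys k).2 (Finset.mem_insert_self k σ)
  have hθne : θ ≠ 0 := by
    intro h
    rw [h, zero_mul] at key
    exact hdetA0 (by
      rcases mul_eq_zero.mp key with h' | h'
      · exact h'
      · exact absurd h' hyk.ne')
  have hθneg : θ < 0 := lt_of_le_of_ne hθ hθne
  rcases hdets.lt_or_gt with hneg | hpos
  · have hApos : 0 < detIW W τ := by nlinarith
    rw [Real.sign_of_pos hApos, Real.sign_of_neg hneg]; norm_num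
  · have hAneg : detIW W τ < 0 := by nlinarith
    rw [Real.sign_of_neg hAneg, Real.sign_of_pos hpos]
end

section
/- Simply-added splits. Let G be a simple directed graph on [n] with CTLN parameters in the legal range, and let τ, ω ⊂ [n] be nonempty disjoint sets such that ω is simply-added to τ, i.e. every k ∈ ω is either a projector onto τ (k→i for all i ∈ τ) or a non-projector onto τ (k↛i for all i ∈ τ). Then for every σ ⊆ τ ∪ ω and every i ∈ τ, s_i^σ = (1/θ) · s_i^{σ∩ω} · s_i^{σ∩τ}, where by convention s_i^∅ = θ; moreover the factor s_i^{σ∩ω} has the same value for every i ∈ τ. -/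
open Matrix Finset

def esum (α β : Type*) : α ⊕ Option β ≃ Option (α ⊕ β) where
  toFun x := match x with
    | .inl a => some (.inl a)
    | .inr none => none
    | .inr (some b) => some (.inr b)
  invFun y := match y with
    | none => .inr none
    | some (.inl a) => .inl a
    | some (.inr b) => .inr (some b)
  left_inv := by rintro (a | _ | b) <;> rfl
  right_inv := by rintro (_ | a | b) <;> rfl

def eopt (α : Type*) : α ⊕ Unit ≃ Option α where
  toFun x := match x with
    | .inl a => some a
    | .inr _ => none
  invFun y := match y with
    | none => .inr Unit.unit
    | some a => .inl a
  left_inv := by rintro (a | _) <;> rfl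
  right_inv := by rintro (_ | a) <;> rfl

lemma abstract_split {α β : Type*} [Fintype α] [Fintype β] [DecidableEq α] [DecidableEq β]
    (θ : ℝ) (hθ : θ ≠ 0) (M : Matrix (Option (α ⊕ β)) (Option (α ⊕ β)) ℝ)
    (hcol : ∀ p, M p none = θ)
    (hconst : ∀ a c, M (some (Sum.inl a)) (some (Sum.inr c)) = M none (some (Sum.inr c))) :
    M.det = (1/θ) * ((M.submatrix (Option.map Sum.inr) (Option.map Sum.inr)).det *
                     (M.submatrix (Option.map Sum.inl) (Option.map Sum.inl)).det) := by
  classical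
  set B₀ : Matrix α α ℝ := fun a a' =>
    M (some (Sum.inl a)) (some (Sum.inl a')) - M none (some (Sum.inl a')) with hB₀
  -- row reduction of M
  set c : Option (α ⊕ β) → ℝ := fun p => match p with
    | some (Sum.inl _) => -1
    | _ => 0 with hc
  set M₁ : Matrix (Option (α ⊕ β)) (Option (α ⊕ β)) ℝ :=
    fun p q => M p q + c p * M none q with hM₁
  have hdet1 : M₁.det = M.det :=
    Matrix.det_eq_of_forall_row_eq_smul_add_const c none rfl (fun i j => rfl)
  have hblock : M₁.submatrix (esum α β) (esum α β) =
      Matrix.fromBlocks B₀ 0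
        (fun p a => M (Option.map Sum.inr p) (some (Sum.inl a)))
        (M.submatrix (Option.map Sum.inr) (Option.map Sum.inr)) := by
    ext p q
    rcases p with a | (_ | b) <;> rcases q with a' | (_ | b') <;>
      simp [hM₁, hc, esum, hB₀, hcol, hconst, Matrix.fromBlocks, Matrix.submatrix, sub_eq_add_neg] <;> ring
  have hMdet : M.det = B₀.det * (M.submatrix (Option.map Sum.inr) (Option.map Sum.inr)).det := by
    rw [← hdet1, ← Matrix.det_submatrix_equiv_self (esum α β), hblock]
    exact Matrix.det_fromBlocks_zero₁₂ _ _ _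
  -- the τ factor
  set P : Matrix (Option α) (Option α) ℝ := M.submatrix (Option.map Sum.inl) (Option.map Sum.inl)
    with hP
  set c' : Option α → ℝ := fun p => match p with
    | some _ => -1
    | none => 0 with hc'
  set P₁ : Matrix (Option α) (Option α) ℝ := fun p q => P p q + c' p * P none q with hP₁
  have hdet2 : P₁.det = P.det :=
    Matrix.det_eq_of_forall_row_eq_smul_add_const c' none rfl (fun i j => rfl)
  have hblock2 : P₁.submatrix (eopt α) (eopt α) =
      Matrix.fromBlocks B₀ 0 (fun _ a => M none (some (Sum.inl a))) (fun _ _ => θ) := by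
    ext p q
    rcases p with a | u <;> rcases q with a' | u' <;>
      simp [hP₁, hc', hP, eopt, hB₀, hcol, Matrix.fromBlocks, Matrix.submatrix, sub_eq_add_neg] <;> ring
  have hPdet : P.det = B₀.det * θ := by
    have h1 : Matrix.det (fun _ _ => θ : Matrix Unit Unit ℝ) = θ := Matrix.det_unique _
    rw [← hdet2, ← Matrix.det_submatrix_equiv_self (eopt α), hblock2]
    exact (Matrix.det_fromBlocks_zero₁₂ _ _ _).trans (congrArg _ h1)
  rw [hMdet, hPdet]
  field_simp
lemma cramerDet_eq_det {n : ℕ} (W : Matrix (Fin n) (Fin n) ℝ) (b : Fin n → ℝ)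
    (s : Finset (Fin n)) (i : Fin n) :
    cramerDet W b s i = Matrix.det (Matrix.of fun (p q : {x // x ∈ insert i s}) =>
      if q.val = i then b p.val else ((if p.val = q.val then (1:ℝ) else 0) - W p.val q.val)) := by
  unfold cramerDet
  refine congrArg Matrix.det ?_
  ext p q
  by_cases h : q.val = i
  · rw [Matrix.updateCol_apply, if_pos (by exact Subtype.ext h)]
    simp [h]
  · rw [Matrix.updateCol_apply, if_neg (by intro hh; exact h (congrArg Subtype.val hh))]
    simp only [Matrix.sub_apply, Matrix.one_apply, Matrix.submatrix_apply, Matrix.of_apply,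
      if_neg h, Subtype.ext_iff]

noncomputable def einsert {n : ℕ} (i : Fin n) (s t : Finset (Fin n))
    (h : ∀ x, x ∈ insert i t ↔ x = i ∨ x ∈ s) (hi : i ∉ s) :
    Option {x // x ∈ s} ≃ {x // x ∈ insert i t} :=
  Equiv.ofBijective (fun p => match p with
      | none => ⟨i, Finset.mem_insert_self i t⟩
      | some a => ⟨a.val, (h a.val).2 (Or.inr a.2)⟩)
    (by
      constructor
      · rintro (_ | a) (_ | a') hh
        · rfl
        · have hv : i = a'.val := congrArg Subtype.val hh
          exact absurd (hv ▸ a'.2) hi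
        · have hv : a.val = i := congrArg Subtype.val hh
          exact absurd (hv ▸ a.2) hi
        · simp only [Subtype.mk.injEq] at hh
          exact congrArg some (Subtype.ext hh)
      · rintro ⟨y, hy⟩
        rcases (h y).1 hy with rfl | hys
        · exact ⟨none, rfl⟩
        · by_cases hyi : y = i
          · exact ⟨none, by simp [hyi]⟩
          · exact ⟨some ⟨y, hys⟩, rfl⟩)

lemma einsert_none {n : ℕ} (i : Fin n) (s t : Finset (Fin n)) (h) (hi : i ∉ s) :
    ((einsert i s t h hi) none).val = i := rfl

lemma einsert_some {n : ℕ} (i : Fin n) (s t : Finset (Fin n)) (h) (hi : i ∉ s)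
    (a : {x // x ∈ s}) : ((einsert i s t h hi) (some a)).val = a.val := rfl

/-- **Simply-added splits.** Let `G` be a simple directed graph with CTLN parameters in the
legal range, and let `τ, ω` be nonempty disjoint subsets of `[n]` such that `ω` is
simply-added to `τ` (each `k ∈ ω` is either a projector or a non-projector onto `τ`).
Then for every `σ ⊆ τ ∪ ω` and every `i ∈ τ`,
`s_i^σ = (1/θ) · s_i^{σ∩ω} · s_i^{σ∩τ}`, and the factor `s_i^{σ∩ω}` has the same value
for every `i ∈ τ`. (With this encoding `s_i^∅ = θ` automatically.) -/
theorem simply_added_splits {n : ℕ} (G : Fin n → Fin n → Prop) [DecidableRel G]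
    (hGirr : ∀ i, ¬ G i i) (ε δ θ : ℝ)
    (hθ : 0 < θ) (hδ : 0 < δ) (hε : 0 < ε) (hεδ : ε < δ / (δ + 1))
    (W : Matrix (Fin n) (Fin n) ℝ) (hWdef : W = ctlnW G ε δ)
    (b : Fin n → ℝ) (hbdef : b = fun _ => θ)
    (τ ω : Finset (Fin n)) (hτ : τ.Nonempty) (hω : ω.Nonempty) (hdisj : Disjoint τ ω)
    (hsa : ∀ k ∈ ω, (∀ i ∈ τ, G k i) ∨ (∀ i ∈ τ, ¬ G k i))
    (σ : Finset (Fin n)) (hσ : σ ⊆ τ ∪ ω) :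
    (∀ i ∈ τ, cramerDet W b σ i
        = (1 / θ) * (cramerDet W b (σ ∩ ω) i * cramerDet W b (σ ∩ τ) i)) ∧
    (∀ i ∈ τ, ∀ j ∈ τ, cramerDet W b (σ ∩ ω) i = cramerDet W b (σ ∩ ω) j) := by
  classical
  subst hWdef hbdef
  have hθ' : θ ≠ 0 := ne_of_gt hθ
  have hW : ∀ p ∈ τ, ∀ p' ∈ τ, ∀ q ∈ ω, ctlnW G ε δ p q = ctlnW G ε δ p' q := by
    intro p hp p' hp' q hq
    have hpq : p ≠ q := fun h => (Finset.disjoint_left.1 hdisj hp) (h ▸ hq)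
    have hp'q : p' ≠ q := fun h => (Finset.disjoint_left.1 hdisj hp') (h ▸ hq)
    rcases hsa q hq with h | h
    · simp [ctlnW, hpq, hp'q, h p hp, h p' hp']
    · simp [ctlnW, hpq, hp'q, h p hp, h p' hp']
  constructor
  · intro i hi
    have hiω : i ∉ σ ∩ ω := fun h =>
      Finset.disjoint_left.1 hdisj hi (Finset.mem_inter.1 h).2
    have hiτe : i ∉ (σ ∩ τ).erase i := Finset.notMem_erase i _
    have hω1 : ∀ x, x ∈ insert i (σ ∩ ω) ↔ x = i ∨ x ∈ σ ∩ ω := fun x => Finset.mem_insert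
    have hτ1 : ∀ x, x ∈ insert i (σ ∩ τ) ↔ x = i ∨ x ∈ (σ ∩ τ).erase i := by
      intro x
      simp only [Finset.mem_insert, Finset.mem_erase]
      by_cases hx : x = i <;> simp [hx]
    let g : Option ({x // x ∈ (σ ∩ τ).erase i} ⊕ {x // x ∈ σ ∩ ω}) → {x // x ∈ insert i σ} :=
      fun p => match p with
      | none => ⟨i, Finset.mem_insert_self i σ⟩
      | some (Sum.inl a) =>
          ⟨a.val, Finset.mem_insert_of_mem
            (Finset.mem_inter.1 (Finset.mem_of_mem_erase a.2)).1⟩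
      | some (Sum.inr c) => ⟨c.val, Finset.mem_insert_of_mem (Finset.mem_inter.1 c.2).1⟩
    have hgbij : Function.Bijective g := by
      constructor
      · rintro (_ | a | c) (_ | a' | c') hh
        · rfl
        · have hv : i = a'.val := congrArg Subtype.val hh
          exact absurd hv.symm (Finset.mem_erase.1 a'.2).1
        · have hv : i = c'.val := congrArg Subtype.val hh
          exact absurd (Finset.mem_inter.1 c'.2).2
            (Finset.disjoint_left.1 hdisj (hv ▸ hi))
        · have hv : a.val = i := congrArg Subtype.val hh
          exact absurd hv (Finset.mem_erase.1 a.2).1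
        · have hv := congrArg Subtype.val hh
          exact congrArg (some ∘ Sum.inl) (Subtype.ext hv)
        · have hv : a.val = c'.val := congrArg Subtype.val hh
          exact absurd (Finset.mem_inter.1 c'.2).2
            (Finset.disjoint_left.1 hdisj
              (hv ▸ (Finset.mem_inter.1 (Finset.mem_of_mem_erase a.2)).2))
        · have hv : c.val = i := congrArg Subtype.val hh
          exact absurd (Finset.mem_inter.1 c.2).2
            (Finset.disjoint_left.1 hdisj (hv ▸ hi))
        · have hv : c.val = a'.val := congrArg Subtype.val hh
          exact absurd (Finset.mem_inter.1 c.2).2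
            (Finset.disjoint_left.1 hdisj
              (hv ▸ (Finset.mem_inter.1 (Finset.mem_of_mem_erase a'.2)).2))
        · have hv := congrArg Subtype.val hh
          exact congrArg (some ∘ Sum.inr) (Subtype.ext hv)
      · rintro ⟨y, hy⟩
        by_cases hyi : y = i
        · exact ⟨none, Subtype.ext hyi.symm⟩
        · have hyσ : y ∈ σ := (Finset.mem_insert.1 hy).resolve_left hyi
          rcases Finset.mem_union.1 (hσ hyσ) with hyτ | hyω
          · exact ⟨some (Sum.inl ⟨y, Finset.mem_erase.2
              ⟨hyi, Finset.mem_inter.2 ⟨hyσ, hyτ⟩⟩⟩), rfl⟩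
          · exact ⟨some (Sum.inr ⟨y, Finset.mem_inter.2 ⟨hyσ, hyω⟩⟩), rfl⟩
    let e := Equiv.ofBijective g hgbij
    let M : Matrix (Option ({x // x ∈ (σ ∩ τ).erase i} ⊕ {x // x ∈ σ ∩ ω}))
        (Option ({x // x ∈ (σ ∩ τ).erase i} ⊕ {x // x ∈ σ ∩ ω})) ℝ :=
      fun p q => if (g q).val = i then θ
        else ((if (g p).val = (g q).val then (1:ℝ) else 0) - ctlnW G ε δ (g p).val (g q).val)
    have h1 : cramerDet (ctlnW G ε δ) (fun _ => θ) σ i = M.det := by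
      rw [cramerDet_eq_det, ← Matrix.det_submatrix_equiv_self e]
      congr 1
    have hcol : ∀ p, M p none = θ := by
      intro p
      show (if (i : Fin n) = i then θ else _) = θ
      rw [if_pos rfl]
    have hconst : ∀ a c, M (some (Sum.inl a)) (some (Sum.inr c)) = M none (some (Sum.inr c)) := by
      intro a c
      have hcω : c.val ∈ ω := (Finset.mem_inter.1 c.2).2
      have haτ : a.val ∈ τ := (Finset.mem_inter.1 (Finset.mem_of_mem_erase a.2)).2
      have hci : c.val ≠ i := fun h => Finset.disjoint_left.1 hdisj (h ▸ hi) hcω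
      have hac : a.val ≠ c.val := fun h =>
        Finset.disjoint_left.1 hdisj haτ (h ▸ hcω)
      have hic : i ≠ c.val := fun h => hci h.symm
      show (if c.val = i then θ else _) = (if c.val = i then θ else _)
      rw [if_neg hci, if_neg hci]
      show ((if a.val = c.val then (1:ℝ) else 0) - _) = ((if i = c.val then (1:ℝ) else 0) - _)
      rw [if_neg hac, if_neg hic, hW a.val haτ i hi c.val hcω]
    have hsplit := abstract_split θ hθ' M hcol hconst
    have hω2 : cramerDet (ctlnW G ε δ) (fun _ => θ) (σ ∩ ω) i
        = (M.submatrix (Option.map Sum.inr) (Option.map Sum.inr)).det := by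
      rw [cramerDet_eq_det,
        ← Matrix.det_submatrix_equiv_self (einsert i (σ ∩ ω) (σ ∩ ω) hω1 hiω)]
      congr 1
      ext p q
      rcases p with _ | p <;> rcases q with _ | q <;> rfl
    have hτ2 : cramerDet (ctlnW G ε δ) (fun _ => θ) (σ ∩ τ) i
        = (M.submatrix (Option.map Sum.inl) (Option.map Sum.inl)).det := by
      rw [cramerDet_eq_det,
        ← Matrix.det_submatrix_equiv_self (einsert i ((σ ∩ τ).erase i) (σ ∩ τ) hτ1 hiτe)]
      congr 1
      ext p q
      rcases p with _ | p <;> rcases q with _ | q <;> rfl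
    rw [h1, hsplit, ← hω2, ← hτ2]
  · intro i hi j hj
    have hiω : i ∉ σ ∩ ω := fun h =>
      Finset.disjoint_left.1 hdisj hi (Finset.mem_inter.1 h).2
    have hjω : j ∉ σ ∩ ω := fun h =>
      Finset.disjoint_left.1 hdisj hj (Finset.mem_inter.1 h).2
    have hω1i : ∀ x, x ∈ insert i (σ ∩ ω) ↔ x = i ∨ x ∈ σ ∩ ω := fun x => Finset.mem_insert
    have hω1j : ∀ x, x ∈ insert j (σ ∩ ω) ↔ x = j ∨ x ∈ σ ∩ ω := fun x => Finset.mem_insert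
    rw [cramerDet_eq_det (s := σ ∩ ω) (i := i), cramerDet_eq_det (s := σ ∩ ω) (i := j),
      ← Matrix.det_submatrix_equiv_self (einsert i (σ ∩ ω) (σ ∩ ω) hω1i hiω),
      ← Matrix.det_submatrix_equiv_self (einsert j (σ ∩ ω) (σ ∩ ω) hω1j hjω)]
    congr 1
    ext p q
    rcases p with _ | p <;> rcases q with _ | q
    · show (if (i : Fin n) = i then θ else _) = (if (j : Fin n) = j then θ else _)
      rw [if_pos rfl, if_pos rfl]
    · have hqω : q.val ∈ ω := (Finset.mem_inter.1 q.2).2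
      have hqi : q.val ≠ i := fun h => Finset.disjoint_left.1 hdisj (h ▸ hi) hqω
      have hqj : q.val ≠ j := fun h => Finset.disjoint_left.1 hdisj (h ▸ hj) hqω
      show (if q.val = i then θ else ((if i = q.val then (1:ℝ) else 0) - ctlnW G ε δ i q.val))
        = (if q.val = j then θ else ((if j = q.val then (1:ℝ) else 0) - ctlnW G ε δ j q.val))
      rw [if_neg hqi, if_neg hqj, if_neg (fun h => hqi h.symm), if_neg (fun h => hqj h.symm),
        hW i hi j hj q.val hqω]
    · show (if (i : Fin n) = i then θ else _) = (if (j : Fin n) = j then θ else _)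
      rw [if_pos rfl, if_pos rfl]
    · have hqω : q.val ∈ ω := (Finset.mem_inter.1 q.2).2
      have hqi : q.val ≠ i := fun h => Finset.disjoint_left.1 hdisj (h ▸ hi) hqω
      have hqj : q.val ≠ j := fun h => Finset.disjoint_left.1 hdisj (h ▸ hj) hqω
      show (if q.val = i then θ
            else ((if p.val = q.val then (1:ℝ) else 0) - ctlnW G ε δ p.val q.val))
        = (if q.val = j then θ
            else ((if p.val = q.val then (1:ℝ) else 0) - ctlnW G ε δ p.val q.val))
      rw [if_neg hqi, if_neg hqj]
end

section
/- Graphical domination. Let G be a simple directed graph on [n] with CTLN parameters in the legal range, and suppose k graphically dominates j with respect to σ ⊆ [n]. Then: (a) if j, k ∈ σ, then σ ∉ FP(G|_σ), and hence σ ∉ FP(G); (b) if j ∈ σ and k ∉ σ, then σ ∉ FP(G|_{σ∪{k}}), and hence σ ∉ FP(G); (c) if j ∉ σ, k ∈ σ, and σ ∈ FP(G|_σ), then σ ∈ FP(G|_{σ∪{j}}). -/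
open Matrix Finset

section aux

variable {n : ℕ}

lemma ctlnW_apply (G : Fin n → Fin n → Prop) [DecidableRel G] (ε δ : ℝ) (i p : Fin n) :
    ctlnW G ε δ i p = if i = p then 0 else if G p i then -1 + ε else -1 - δ := rfl

lemma pos_max_eq {a c : ℝ} (h : a = max 0 c) (ha : 0 < a) : a = c := by
  rcases le_or_gt c 0 with hc | hc
  · rw [max_eq_left hc] at h; linarith
  · rw [max_eq_right hc.le] at h; exact h

/-- Key strict inequality: comparing the (shifted) inputs to `j` and `k`. -/
lemma ctln_key_lt (G : Fin n → Fin n → Prop) [DecidableRel G]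
    (hGirr : ∀ i, ¬ G i i) (ε δ : ℝ) (hδ : 0 < δ) (hε : 0 < ε)
    (σ : Finset (Fin n)) (j k : Fin n) (hdom : GraphDominates G σ k j)
    (x : Fin n → ℝ) (hpos : ∀ i ∈ σ, 0 < x i) :
    ∑ p ∈ σ, (ctlnW G ε δ j p - if j = p then 1 else 0) * x p
      < ∑ p ∈ σ, (ctlnW G ε δ k p - if k = p then 1 else 0) * x p := by
  obtain ⟨hor, h1, h2, h3⟩ := hdom
  have hjk : j ≠ k := by
    rintro rfl
    rcases hor with h | h
    · exact hGirr j (h2 h)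
    · exact hGirr j (h2 h)
  have hterm : ∀ p ∈ σ, (ctlnW G ε δ j p - if j = p then 1 else 0)
      ≤ (ctlnW G ε δ k p - if k = p then 1 else 0) := by
    intro p hp
    by_cases hpj : p = j
    · subst hpj
      have e1 : ctlnW G ε δ p p = 0 := by rw [ctlnW_apply, if_pos rfl]
      have e2 : ctlnW G ε δ k p = -1 + ε := by
        rw [ctlnW_apply, if_neg (Ne.symm hjk), if_pos (h2 hp)]
      rw [e1, e2, if_pos rfl, if_neg (Ne.symm hjk : k ≠ p)]
      linarith
    · by_cases hpk : p = k
      · subst hpk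
        have e1 : ctlnW G ε δ j p = -1 - δ := by
          rw [ctlnW_apply, if_neg hjk, if_neg (h3 hp)]
        have e2 : ctlnW G ε δ p p = 0 := by rw [ctlnW_apply, if_pos rfl]
        rw [e1, e2, if_neg hjk, if_pos rfl]
        linarith
      · have hjp : j ≠ p := fun h => hpj h.symm
        have hkp : k ≠ p := fun h => hpk h.symm
        rw [if_neg hjp, if_neg hkp, ctlnW_apply, ctlnW_apply, if_neg hjp, if_neg hkp]
        by_cases hGj : G p j
        · rw [if_pos (h1 p hp hpj hpk hGj), if_pos hGj]
        · rw [if_neg hGj]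
          by_cases hGk : G p k
          · rw [if_pos hGk]; linarith
          · rw [if_neg hGk]
  have hstrict : ∃ p ∈ σ, (ctlnW G ε δ j p - if j = p then 1 else 0)
      < (ctlnW G ε δ k p - if k = p then 1 else 0) := by
    rcases hor with hjσ | hkσ
    · refine ⟨j, hjσ, ?_⟩
      have e1 : ctlnW G ε δ j j = 0 := by rw [ctlnW_apply, if_pos rfl]
      have e2 : ctlnW G ε δ k j = -1 + ε := by
        rw [ctlnW_apply, if_neg (Ne.symm hjk), if_pos (h2 hjσ)]
      rw [e1, e2, if_pos rfl, if_neg (Ne.symm hjk : k ≠ j)]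
      linarith
    · refine ⟨k, hkσ, ?_⟩
      have e1 : ctlnW G ε δ j k = -1 - δ := by
        rw [ctlnW_apply, if_neg hjk, if_neg (h3 hkσ)]
      have e2 : ctlnW G ε δ k k = 0 := by rw [ctlnW_apply, if_pos rfl]
      rw [e1, e2, if_neg hjk, if_pos rfl]
      linarith
  obtain ⟨p₀, hp₀, hlt₀⟩ := hstrict
  exact Finset.sum_lt_sum (fun p hp => mul_le_mul_of_nonneg_right (hterm p hp)
      (le_of_lt (hpos p hp))) ⟨p₀, hp₀, mul_lt_mul_of_pos_right hlt₀ (hpos p₀ hp₀)⟩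

/-- Basic facts about a restricted fixed point with support `σ`. -/
lemma fp_basic {W : Matrix (Fin n) (Fin n) ℝ} {b : Fin n → ℝ} {τ σ : Finset (Fin n)}
    {x : Fin n → ℝ} (hfp : IsRestFixedPoint W b τ x) (hsupp : ∀ i, 0 < x i ↔ i ∈ σ) :
    (∀ i ∉ σ, x i = 0) ∧ σ ⊆ τ := by
  obtain ⟨hfix, hout⟩ := hfp
  have hzero : ∀ i ∉ σ, x i = 0 := by
    intro i hi
    by_cases hiτ : i ∈ τ
    · have h1 : x i = max 0 _ := hfix i hiτ
      have h2 : ¬ 0 < x i := fun h => hi ((hsupp i).1 h)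
      have h3 : 0 ≤ x i := h1 ▸ le_max_left _ _
      exact le_antisymm (not_lt.1 h2) h3
    · exact hout i hiτ
  refine ⟨hzero, fun i hi => ?_⟩
  by_contra hiτ
  have hgt := (hsupp i).2 hi
  rw [hout i hiτ] at hgt
  exact lt_irrefl 0 hgt

lemma sum_restrict {W : Matrix (Fin n) (Fin n) ℝ} {τ σ : Finset (Fin n)}
    {x : Fin n → ℝ} (hστ : σ ⊆ τ) (hzero : ∀ i ∉ σ, x i = 0) (i : Fin n) :
    ∑ p ∈ τ, W i p * x p = ∑ p ∈ σ, W i p * x p :=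
  (Finset.sum_subset hστ (fun p _ hp => by rw [hzero p hp, mul_zero])).symm

lemma sum_shift {W : Matrix (Fin n) (Fin n) ℝ} {σ : Finset (Fin n)}
    (x : Fin n → ℝ) (i : Fin n) :
    ∑ p ∈ σ, (W i p - if i = p then 1 else 0) * x p
      = ∑ p ∈ σ, W i p * x p - (if i ∈ σ then x i else 0) := by
  simp only [sub_mul, ite_mul, one_mul, zero_mul, Finset.sum_sub_distrib,
    Finset.sum_ite_eq]

/-- Cases (a) and (b) uniformly: if `j ∈ σ` and `k ∈ τ`, then `σ ∉ FP(W_τ)`. -/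
lemma not_memFP (G : Fin n → Fin n → Prop) [DecidableRel G]
    (hGirr : ∀ i, ¬ G i i) (ε δ θ : ℝ) (hδ : 0 < δ) (hε : 0 < ε)
    (σ τ : Finset (Fin n)) (j k : Fin n) (hdom : GraphDominates G σ k j)
    (hj : j ∈ σ) (hk : k ∈ τ) :
    ¬ memFP (ctlnW G ε δ) (fun _ => θ) τ σ := by
  rintro ⟨x, hfp, hsupp⟩
  obtain ⟨hzero, hστ⟩ := fp_basic hfp hsupp
  obtain ⟨hfix, hout⟩ := hfp
  have hpos : ∀ i ∈ σ, 0 < x i := fun i hi => (hsupp i).2 hi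
  have key := ctln_key_lt G hGirr ε δ hδ hε σ j k hdom x hpos
  rw [sum_shift, sum_shift, if_pos hj] at key
  have hmaxj : x j = max 0 (∑ p ∈ σ, ctlnW G ε δ j p * x p + θ) := by
    have h := hfix j (hστ hj)
    rw [sum_restrict hστ hzero] at h
    exact h
  have hxj : x j = ∑ p ∈ σ, ctlnW G ε δ j p * x p + θ :=
    pos_max_eq hmaxj (hpos j hj)
  by_cases hkσ : k ∈ σ
  · rw [if_pos hkσ] at key
    have hmaxk : x k = max 0 (∑ p ∈ σ, ctlnW G ε δ k p * x p + θ) := by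
      have h := hfix k hk
      rw [sum_restrict hστ hzero] at h
      exact h
    have hxk : x k = ∑ p ∈ σ, ctlnW G ε δ k p * x p + θ :=
      pos_max_eq hmaxk (hpos k hkσ)
    linarith
  · rw [if_neg hkσ] at key
    have hxk0 : x k = 0 := hzero k hkσ
    have h := hfix k hk
    rw [sum_restrict hστ hzero] at h
    have hposk : 0 < ∑ p ∈ σ, ctlnW G ε δ k p * x p + θ := by linarith
    rw [max_eq_right (le_of_lt hposk)] at h
    linarith

end aux

/-- **Graphical domination.** Let `G` be a simple directed graph with CTLN parameters in the
legal range, and suppose `k` graphically dominates `j` with respect to `σ`. Then: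
(a) if `j, k ∈ σ` then `σ ∉ FP(G|_σ)` and hence `σ ∉ FP(G)`;
(b) if `j ∈ σ`, `k ∉ σ` then `σ ∉ FP(G|_{σ∪{k}})` and hence `σ ∉ FP(G)`;
(c) if `j ∉ σ`, `k ∈ σ` and `σ ∈ FP(G|_σ)`, then `σ ∈ FP(G|_{σ∪{j}})`. -/
theorem graphical_domination {n : ℕ} (G : Fin n → Fin n → Prop) [DecidableRel G]
    (hGirr : ∀ i, ¬ G i i) (ε δ θ : ℝ)
    (hθ : 0 < θ) (hδ : 0 < δ) (hε : 0 < ε) (hεδ : ε < δ / (δ + 1))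
    (W : Matrix (Fin n) (Fin n) ℝ) (hWdef : W = ctlnW G ε δ)
    (b : Fin n → ℝ) (hbdef : b = fun _ => θ)
    (σ : Finset (Fin n)) (j k : Fin n) (hdom : GraphDominates G σ k j) :
    (j ∈ σ → k ∈ σ → ¬ memFP W b σ σ ∧ ¬ memFP W b Finset.univ σ) ∧
    (j ∈ σ → k ∉ σ → ¬ memFP W b (insert k σ) σ ∧ ¬ memFP W b Finset.univ σ) ∧
    (j ∉ σ → k ∈ σ → memFP W b σ σ → memFP W b (insert j σ) σ) := by
  subst hWdef hbdef
  refine ⟨fun hj hk => ⟨not_memFP G hGirr ε δ θ hδ hε σ σ j k hdom hj hk,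
      not_memFP G hGirr ε δ θ hδ hε σ Finset.univ j k hdom hj (Finset.mem_univ k)⟩,
    fun hj hk => ⟨not_memFP G hGirr ε δ θ hδ hε σ (insert k σ) j k hdom hj
      (Finset.mem_insert_self k σ),
      not_memFP G hGirr ε δ θ hδ hε σ Finset.univ j k hdom hj (Finset.mem_univ k)⟩,
    fun hj hk hmem => ?_⟩
  obtain ⟨x, hfp, hsupp⟩ := hmem
  obtain ⟨hzero, hστ⟩ := fp_basic hfp hsupp
  obtain ⟨hfix, hout⟩ := hfp
  have hpos : ∀ i ∈ σ, 0 < x i := fun i hi => (hsupp i).2 hi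
  have hxj0 : x j = 0 := hzero j hj
  have hsum : ∀ i, ∑ p ∈ insert j σ, ctlnW G ε δ i p * x p
      = ∑ p ∈ σ, ctlnW G ε δ i p * x p := by
    intro i
    rw [Finset.sum_insert hj, hxj0, mul_zero, zero_add]
  refine ⟨x, ⟨fun i hi => ?_, fun i hi => hout i fun hiσ =>
      hi (Finset.mem_insert_of_mem hiσ)⟩, hsupp⟩
  rcases Finset.mem_insert.1 hi with heq | hiσ
  · -- i = j : show x j = 0 = max 0 (input), i.e. input < 0
    subst heq
    have key := ctln_key_lt G hGirr ε δ hδ hε σ i k hdom x hpos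
    rw [sum_shift, sum_shift, if_neg hj, if_pos hk] at key
    have hmaxk : x k = max 0 (∑ p ∈ σ, ctlnW G ε δ k p * x p + θ) := hfix k hk
    have hxk : x k = ∑ p ∈ σ, ctlnW G ε δ k p * x p + θ :=
      pos_max_eq hmaxk (hpos k hk)
    have hneg : ∑ p ∈ σ, ctlnW G ε δ i p * x p + θ < 0 := by linarith
    rw [hsum, hxj0]
    exact (max_eq_left hneg.le).symm
  · rw [hsum]
    exact hfix i hiσ
end

section
/- General domination. Let (W, θ·1) be a competitive nondegenerate TLN on n neurons with uniform external input θ > 0, and for σ ⊆ [n] and j ∈ [n] define w_j^σ := Σ_{i∈σ} (−I+W)_{ji} · |s_i^σ|. Then for any nonempty σ ⊆ [n]: (1) σ is a permitted motif (σ ∈ FP(W_σ, θ·1)) if and only if σ is domination-free, i.e. w_j^σ = w_k^σ for all j, k ∈ σ; and (2) if σ is a permitted motif, then σ ∈ FP(W, θ·1) if and only if for every k ∉ σ there exists j ∈ σ with w_j^σ > w_k^σ. -/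
open Matrix Finset

noncomputable def cdAux {n : ℕ} (W : Matrix (Fin n) (Fin n) ℝ) (b : Fin n → ℝ)
    (τ : Finset (Fin n)) (i : Fin n) (hi : i ∈ τ) : ℝ :=
  (Matrix.updateCol
      ((1 : Matrix {x // x ∈ τ} {x // x ∈ τ} ℝ) - W.submatrix Subtype.val Subtype.val)
      ⟨i, hi⟩ (fun p => b p.val)).det

lemma cdAux_congr {n : ℕ} (W : Matrix (Fin n) (Fin n) ℝ) (b : Fin n → ℝ)
    {τ τ' : Finset (Fin n)} (h : τ = τ') (i : Fin n) (hi : i ∈ τ) (hi' : i ∈ τ') :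
    cdAux W b τ i hi = cdAux W b τ' i hi' := by subst h; rfl

lemma cramerDet_eq_cdAux {n : ℕ} (W : Matrix (Fin n) (Fin n) ℝ) (b : Fin n → ℝ)
    (σ : Finset (Fin n)) (i : Fin n) :
    cramerDet W b σ i = cdAux W b (insert i σ) i (Finset.mem_insert_self i σ) := rfl

lemma cramerDet_mem {n : ℕ} (W : Matrix (Fin n) (Fin n) ℝ) (b : Fin n → ℝ)
    (σ : Finset (Fin n)) (i : Fin n) (hi : i ∈ σ) :
    cramerDet W b σ i = cdAux W b σ i hi := by
  rw [cramerDet_eq_cdAux]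
  exact cdAux_congr W b (Finset.insert_eq_self.mpr hi) i _ hi

lemma cramerDet_insert {n : ℕ} (W : Matrix (Fin n) (Fin n) ℝ) (b : Fin n → ℝ)
    (σ : Finset (Fin n)) (k : Fin n) :
    cramerDet W b (insert k σ) k = cramerDet W b σ k := by
  rw [cramerDet_eq_cdAux, cramerDet_eq_cdAux]
  exact cdAux_congr W b (by simp) k _ _
/-- Equiv between `σ ⊕ Unit` and `insert k σ` when `k ∉ σ`. -/
def insEquiv {n : ℕ} (σ : Finset (Fin n)) (k : Fin n) (hk : k ∉ σ) :
    ({x // x ∈ σ} ⊕ Unit) ≃ {x // x ∈ insert k σ} where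
  toFun := Sum.elim (fun a => ⟨a.1, Finset.mem_insert_of_mem a.2⟩)
    (fun _ => ⟨k, Finset.mem_insert_self k σ⟩)
  invFun := fun p => if h : p.1 ∈ σ then Sum.inl ⟨p.1, h⟩ else Sum.inr ()
  left_inv := by
    rintro (a | u)
    · simp [a.2]
    · simp [hk]
  right_inv := by
    rintro ⟨p, hp⟩
    rcases Finset.mem_insert.mp hp with h | h
    · subst h; simp [hk]
    · simp [h]

lemma cramerDet_not_mem {n : ℕ} (W : Matrix (Fin n) (Fin n) ℝ) (θ : ℝ)
    (σ : Finset (Fin n)) (k : Fin n) (hk : k ∉ σ)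
    (hd : ((1 : Matrix {x // x ∈ σ} {x // x ∈ σ} ℝ)
        - W.submatrix Subtype.val Subtype.val).det ≠ 0)
    (x' : {x // x ∈ σ} → ℝ)
    (hx : ((1 : Matrix {x // x ∈ σ} {x // x ∈ σ} ℝ)
        - W.submatrix Subtype.val Subtype.val) *ᵥ x' = fun _ => θ) :
    cramerDet W (fun _ => θ) σ k
      = ((1 : Matrix {x // x ∈ σ} {x // x ∈ σ} ℝ) - W.submatrix Subtype.val Subtype.val).det
        * (θ + ∑ i : {x // x ∈ σ}, W k i.val * x' i) := by
  classical
  set A : Matrix {x // x ∈ σ} {x // x ∈ σ} ℝ :=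
    (1 : Matrix {x // x ∈ σ} {x // x ∈ σ} ℝ) - W.submatrix Subtype.val Subtype.val with hA
  haveI : Invertible A := A.invertibleOfIsUnitDet (isUnit_iff_ne_zero.mpr hd)
  have hinv : ⅟A *ᵥ (fun _ => θ) = x' := by
    rw [← hx, Matrix.mulVec_mulVec, invOf_mul_self, Matrix.one_mulVec]
  set e := insEquiv σ k hk with he
  set M : Matrix {x // x ∈ insert k σ} {x // x ∈ insert k σ} ℝ :=
    Matrix.updateCol
      ((1 : Matrix {x // x ∈ insert k σ} {x // x ∈ insert k σ} ℝ)
        - W.submatrix Subtype.val Subtype.val)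
      ⟨k, Finset.mem_insert_self k σ⟩ (fun _ => θ) with hM
  have hcd : cramerDet W (fun _ => θ) σ k = M.det := rfl
  have hsub : M.submatrix e e
      = Matrix.fromBlocks A (Matrix.of fun _ _ => θ)
          (Matrix.of fun _ (b : {x // x ∈ σ}) => -W k b.val) (Matrix.of fun _ _ => θ) := by
    ext p q
    cases p with
    | inl a =>
      cases q with
      | inl c =>
        have hne : (e (Sum.inl c)) ≠ (⟨k, Finset.mem_insert_self k σ⟩ :
            {x // x ∈ insert k σ}) := by
          simp only [he, insEquiv, Equiv.coe_fn_mk, Sum.elim_inl, ne_eq, Subtype.mk.injEq]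
          rintro rfl; exact hk c.2
        simp only [Matrix.submatrix_apply, hM, Matrix.updateCol_apply, if_neg hne,
          Matrix.sub_apply, Matrix.one_apply, Matrix.submatrix_apply,
          Matrix.fromBlocks_apply₁₁, hA]
        rw [if_congr (show e (Sum.inl a) = e (Sum.inl c) ↔ a = c by simp) rfl rfl]; rfl
      | inr u =>
        simp [hM, he, insEquiv, Matrix.updateCol_apply]
    | inr u =>
      cases q with
      | inl c =>
        have hne : (e (Sum.inl c)) ≠ (⟨k, Finset.mem_insert_self k σ⟩ :
            {x // x ∈ insert k σ}) := by
          simp only [he, insEquiv, Equiv.coe_fn_mk, Sum.elim_inl, ne_eq, Subtype.mk.injEq]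
          rintro rfl; exact hk c.2
        have hkc : (k : Fin n) ≠ c.val := by rintro rfl; exact hk c.2
        simp only [Matrix.submatrix_apply, hM, Matrix.updateCol_apply, if_neg hne,
          Matrix.sub_apply, Matrix.one_apply, Matrix.fromBlocks_apply₂₁]
        simp [he, insEquiv, Subtype.ext_iff, hkc]
      | inr v =>
        simp [hM, he, insEquiv, Matrix.updateCol_apply]
  have hdet : M.det = (M.submatrix e e).det := (Matrix.det_submatrix_equiv_self e M).symm
  rw [hcd, hdet, hsub, Matrix.det_fromBlocks₁₁]
  congr 1
  rw [Matrix.det_unique]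
  have hIB : (@HMul.hMul _ _ _ Matrix.instHMulOfFintypeOfMulOfAddCommMonoid ⅟A <| Matrix.of fun _ (_ : Unit) => θ)
      = Matrix.of fun a (_ : Unit) => x' a := by
    ext a u
    have := congrFun hinv a
    simpa [Matrix.mul_apply, Matrix.mulVec, dotProduct] using this
  rw [Matrix.mul_assoc, hIB]
  simp [Matrix.sub_apply, Matrix.mul_apply]
/-- **General domination.** Let `(W, θ·1)` be a competitive nondegenerate TLN with uniform
external input `θ > 0`, and let `w_j^σ := ∑_{i∈σ} (−I+W)_{ji} |s_i^σ|`. Then for any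
nonempty `σ`: (1) `σ` is a permitted motif iff `σ` is domination-free
(`w_j^σ = w_k^σ` for all `j, k ∈ σ`); (2) if `σ` is a permitted motif, then
`σ ∈ FP(W, θ·1)` iff for every `k ∉ σ` there exists `j ∈ σ` with `w_j^σ > w_k^σ`. -/
theorem general_domination {n : ℕ} (W : Matrix (Fin n) (Fin n) ℝ) (θ : ℝ) (hθ : 0 < θ)
    (b : Fin n → ℝ) (hbdef : b = fun _ => θ)
    (hW : Competitive W b) (hnd : Nondegenerate W b)
    (σ : Finset (Fin n)) (hσ : σ.Nonempty) :
    (memFP W b σ σ ↔ ∀ j ∈ σ, ∀ k ∈ σ, wval W b σ j = wval W b σ k) ∧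
    (memFP W b σ σ →
      (memFP W b Finset.univ σ ↔ ∀ k ∉ σ, ∃ j ∈ σ, wval W b σ k < wval W b σ j)) := by
  classical
  subst hbdef
  obtain ⟨hWle, hWdiag, -⟩ := hW
  obtain ⟨-, hdet, hcd⟩ := hnd
  obtain ⟨j₀, hj₀⟩ := hσ
  set A : Matrix {x // x ∈ σ} {x // x ∈ σ} ℝ :=
    (1 : Matrix {x // x ∈ σ} {x // x ∈ σ} ℝ) - W.submatrix Subtype.val Subtype.val with hA
  have hd : A.det ≠ 0 := hdet σ
  haveI : Invertible A := A.invertibleOfIsUnitDet (isUnit_iff_ne_zero.mpr hd)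
  set x' : {x // x ∈ σ} → ℝ := ⅟A *ᵥ (fun _ => θ) with hx'def
  have hAx : A *ᵥ x' = fun _ => θ := by
    rw [hx'def, Matrix.mulVec_mulVec, mul_invOf_self, Matrix.one_mulVec]
  have huniq : ∀ z : {x // x ∈ σ} → ℝ, A *ᵥ z = (fun _ => θ) → z = x' := by
    intro z hz
    have h : ⅟A *ᵥ (A *ᵥ z) = z := by
      rw [Matrix.mulVec_mulVec, invOf_mul_self, Matrix.one_mulVec]
    rw [← h, hz, hx'def]
  have hAapp : ∀ (z : {x // x ∈ σ} → ℝ) (j : {x // x ∈ σ}),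
      (A *ᵥ z) j = z j - ∑ i : {x // x ∈ σ}, W j.val i.val * z i := by
    intro z j
    simp [hA, Matrix.mulVec, dotProduct, Matrix.sub_apply, Matrix.one_apply, sub_mul,
      Finset.sum_sub_distrib]
  have hrow : ∀ j : {x // x ∈ σ}, x' j = ∑ i : {x // x ∈ σ}, W j.val i.val * x' i + θ := by
    intro j
    have h := congrFun hAx j
    rw [hAapp] at h
    linarith
  have hsv : ∀ i : {x // x ∈ σ}, cramerDet W (fun _ => θ) σ i.val = A.det * x' i := by
    intro i
    rw [cramerDet_mem W (fun _ => θ) σ i.val i.2]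
    have h1 : cdAux W (fun _ => θ) σ i.val i.2 = Matrix.cramer A (fun _ => θ) i := by
      rw [Matrix.cramer_apply]; rfl
    have h2 : A.adjugate = A.det • ⅟A := by
      calc A.adjugate = ⅟A * (A * A.adjugate) := by
            rw [← Matrix.mul_assoc, invOf_mul_self, Matrix.one_mul]
        _ = ⅟A * (A.det • 1) := by rw [A.mul_adjugate]
        _ = A.det • ⅟A := by rw [Matrix.mul_smul, Matrix.mul_one]
    rw [h1, Matrix.cramer_eq_adjugate_mulVec, h2, Matrix.smul_mulVec]
    simp [hx'def]
  have hsne : ∀ i : {x // x ∈ σ}, cramerDet W (fun _ => θ) σ i.val ≠ 0 :=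
    fun i => hcd σ (fun _ _ => hθ) i.val i.2
  have hx'ne : ∀ i, x' i ≠ 0 := by
    intro i h
    exact hsne i (by rw [hsv i, h, mul_zero])
  have hsk : ∀ k ∉ σ, cramerDet W (fun _ => θ) σ k
      = A.det * (θ + ∑ i : {x // x ∈ σ}, W k i.val * x' i) := by
    intro k hk
    exact cramerDet_not_mem W θ σ k hk (by rw [← hA]; exact hd) x' (by rw [← hA]; exact hAx)
  have hskne : ∀ k ∉ σ, cramerDet W (fun _ => θ) σ k ≠ 0 := by
    intro k hk
    have h1 : cramerDet W (fun _ => θ) (insert k σ) k ≠ 0 :=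
      hcd (insert k σ) (fun _ _ => hθ) k (Finset.mem_insert_self k σ)
    rwa [cramerDet_insert] at h1
  have hwval : ∀ j : Fin n, wval W (fun _ => θ) σ j
      = ∑ i : {x // x ∈ σ},
          (W j i.val - if j = i.val then 1 else 0) * |cramerDet W (fun _ => θ) σ i.val| := by
    intro j
    rw [wval, ← Finset.sum_coe_sort σ
      (fun i => (W j i - if j = i then 1 else 0) * |cramerDet W (fun _ => θ) σ i|)]
  have hsplit : ∀ (j : {x // x ∈ σ}) (f : {x // x ∈ σ} → ℝ),
      ∑ i : {x // x ∈ σ}, (W j.val i.val - if j.val = i.val then 1 else 0) * f i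
        = (∑ i : {x // x ∈ σ}, W j.val i.val * f i) - f j := by
    intro j f
    have h : ∀ i : {x // x ∈ σ}, (if j.val = i.val then (1:ℝ) else 0) = if j = i then 1 else 0 := by
      intro i; exact if_congr Subtype.ext_iff.symm rfl rfl
    simp only [sub_mul, Finset.sum_sub_distrib, h, ite_mul, one_mul, zero_mul,
      Finset.sum_ite_eq, Finset.mem_univ, if_true]
  have hwmem : (∀ i, 0 < x' i) →
      ∀ j : {x // x ∈ σ}, wval W (fun _ => θ) σ j.val = -(θ * |A.det|) := by
    intro hp j
    have habs : ∀ i : {x // x ∈ σ},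
        |cramerDet W (fun _ => θ) σ i.val| = |A.det| * x' i := by
      intro i; rw [hsv i, abs_mul, abs_of_pos (hp i)]
    rw [hwval, hsplit j (fun i => |cramerDet W (fun _ => θ) σ i.val|)]
    simp only [habs]
    have h1 : ∑ i : {x // x ∈ σ}, W j.val i.val * (|A.det| * x' i)
        = |A.det| * ∑ i : {x // x ∈ σ}, W j.val i.val * x' i := by
      rw [Finset.mul_sum]; exact Finset.sum_congr rfl (fun i _ => by ring)
    rw [h1]
    have h2 := hrow j
    nlinarith [abs_nonneg A.det]
  have hwnot : (∀ i, 0 < x' i) → ∀ k ∉ σ, wval W (fun _ => θ) σ k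
      = |A.det| * ∑ i : {x // x ∈ σ}, W k i.val * x' i := by
    intro hp k hk
    have habs : ∀ i : {x // x ∈ σ},
        |cramerDet W (fun _ => θ) σ i.val| = |A.det| * x' i := by
      intro i; rw [hsv i, abs_mul, abs_of_pos (hp i)]
    rw [hwval]
    have h0 : ∀ i : {x // x ∈ σ}, (if k = i.val then (1:ℝ) else 0) = 0 := by
      intro i; rw [if_neg]; rintro rfl; exact hk i.2
    simp only [habs, h0, sub_zero, Finset.mul_sum]
    exact Finset.sum_congr rfl (fun i _ => by ring)
  have hpos : memFP W (fun _ => θ) σ σ ↔ ∀ i, 0 < x' i := by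
    constructor
    · rintro ⟨x, ⟨hfp, -⟩, hsupp⟩
      have hz : A *ᵥ (fun i : {x // x ∈ σ} => x i.val) = fun _ => θ := by
        funext j
        rw [hAapp]
        have h1 := hfp j.val j.2
        have h2 : (0:ℝ) < x j.val := (hsupp j.val).mpr j.2
        have h3 : x j.val = ∑ i ∈ σ, W j.val i * x i + θ := by
          rcases le_or_gt (∑ i ∈ σ, W j.val i * x i + θ) 0 with h | h
          · rw [h1, max_eq_left h] at h2; exact absurd h2 (lt_irrefl 0)
          · rw [h1, max_eq_right h.le]
        rw [← Finset.sum_coe_sort σ (fun i => W j.val i * x i)] at h3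
        linarith
      have heq := huniq _ hz
      intro i
      rw [← congrFun heq i]
      exact (hsupp i.val).mpr i.2
    · intro hp
      refine ⟨fun i => if h : i ∈ σ then x' ⟨i, h⟩ else 0, ⟨?_, ?_⟩, ?_⟩
      · intro i hi
        beta_reduce
        have hsum : ∑ j ∈ σ, W i j * (if h : j ∈ σ then x' ⟨j, h⟩ else 0)
            = ∑ j : {x // x ∈ σ}, W i j.val * x' j := by
          rw [← Finset.sum_coe_sort σ (fun j => W i j * (if h : j ∈ σ then x' ⟨j, h⟩ else 0))]
          exact Finset.sum_congr rfl (fun j _ => by rw [dif_pos j.2])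
        rw [dif_pos hi, hsum, ← hrow ⟨i, hi⟩]
        exact (max_eq_right (hp ⟨i, hi⟩).le).symm
      · intro i hi; beta_reduce; rw [dif_neg hi]
      · intro i
        constructor
        · intro h
          by_contra hi
          beta_reduce at h
          rw [dif_neg hi] at h
          exact lt_irrefl _ h
        · intro hi
          beta_reduce
          rw [dif_pos hi]
          exact hp _
  constructor
  · constructor
    · intro hmem j hj k hk
      have hp := hpos.mp hmem
      exact (hwmem hp ⟨j, hj⟩).trans (hwmem hp ⟨k, hk⟩).symm
    · intro hw
      apply hpos.mpr
      set y : {x // x ∈ σ} → ℝ := fun i => |cramerDet W (fun _ => θ) σ i.val| with hy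
      set c := wval W (fun _ => θ) σ j₀ with hc
      have hwy : ∀ j : {x // x ∈ σ},
          wval W (fun _ => θ) σ j.val = (∑ i : {x // x ∈ σ}, W j.val i.val * y i) - y j := by
        intro j
        rw [hwval, hsplit j y]
      have hwj : ∀ j : {x // x ∈ σ}, wval W (fun _ => θ) σ j.val = c := fun j => hw j.val j.2 j₀ hj₀
      have hypos : ∀ i : {x // x ∈ σ}, 0 < y i := fun i => abs_pos.mpr (hsne i)
      have hyle : ∀ j : {x // x ∈ σ}, ∑ i : {x // x ∈ σ}, W j.val i.val * y i ≤ 0 := by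
        intro j
        apply Finset.sum_nonpos
        intro i _
        exact mul_nonpos_of_nonpos_of_nonneg (hWle _ _) (abs_nonneg _)
      have hcneg : c < 0 := by
        have h1 := (hwj ⟨j₀, hj₀⟩).symm.trans (hwy ⟨j₀, hj₀⟩)
        have h2 := hyle ⟨j₀, hj₀⟩
        have h3 := hypos ⟨j₀, hj₀⟩
        linarith
      have hAy : A *ᵥ ((θ / (-c)) • y) = fun _ => θ := by
        funext j
        rw [Matrix.mulVec_smul]
        have h1 : (A *ᵥ y) j = -c := by
          rw [hAapp]
          have := (hwj j).symm.trans (hwy j)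
          linarith
        have hcne : (-c) ≠ 0 := by linarith
        simp only [Pi.smul_apply, h1, smul_eq_mul]
        exact div_mul_cancel₀ θ hcne
      have heq := huniq _ hAy
      intro i
      rw [← congrFun heq i]
      have hcpos : 0 < -c := by linarith
      simp only [Pi.smul_apply, smul_eq_mul]
      exact mul_pos (div_pos hθ hcpos) (hypos i)
  · intro hperm
    have hp := hpos.mp hperm
    constructor
    · rintro ⟨x, ⟨hfp, -⟩, hsupp⟩ k hk
      have hx0 : ∀ i, i ∉ σ → x i = 0 := by
        intro i hi
        have h1 := hfp i (Finset.mem_univ i)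
        have h2 : ¬ 0 < x i := fun h => hi ((hsupp i).mp h)
        have h3 : 0 ≤ x i := h1 ▸ le_max_left _ _
        linarith [not_lt.mp h2]
      have hzuniv : ∀ i, ∑ j, W i j * x j = ∑ j : {x // x ∈ σ}, W i j.val * x j.val := by
        intro i
        rw [Finset.sum_coe_sort σ (fun j => W i j * x j)]
        refine (Finset.sum_subset (Finset.subset_univ σ) ?_).symm
        intro j _ hj
        rw [hx0 j hj, mul_zero]
      have hz : A *ᵥ (fun i : {x // x ∈ σ} => x i.val) = fun _ => θ := by
        funext j
        rw [hAapp]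
        have h1 := hfp j.val (Finset.mem_univ j.val)
        have h2 : (0:ℝ) < x j.val := (hsupp j.val).mpr j.2
        have h3 : x j.val = ∑ i, W j.val i * x i + θ := by
          rcases le_or_gt (∑ i, W j.val i * x i + θ) 0 with h | h
          · rw [h1, max_eq_left h] at h2; exact absurd h2 (lt_irrefl 0)
          · rw [h1, max_eq_right h.le]
        rw [hzuniv j.val] at h3
        linarith
      have hxeq := huniq _ hz
      have h1 := hfp k (Finset.mem_univ k)
      have h2 : x k = 0 := hx0 k hk
      have hsum : ∑ j, W k j * x j = ∑ j : {x // x ∈ σ}, W k j.val * x' j := by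
        rw [hzuniv k]
        exact Finset.sum_congr rfl (fun j _ => by rw [← congrFun hxeq j])
      have h3 : ∑ j : {x // x ∈ σ}, W k j.val * x' j + θ ≤ 0 := by
        by_contra h
        push_neg at h
        rw [h2, hsum] at h1
        rw [max_eq_right h.le] at h1
        linarith
      have h4 : θ + ∑ j : {x // x ∈ σ}, W k j.val * x' j ≠ 0 := by
        intro h
        exact hskne k hk (by rw [hsk k hk, h, mul_zero])
      have h5 : ∑ j : {x // x ∈ σ}, W k j.val * x' j < -θ :=
        lt_of_le_of_ne (by linarith) (fun h => h4 (by rw [h]; ring))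
      refine ⟨j₀, hj₀, ?_⟩
      rw [hwnot hp k hk]
      have h6 := hwmem hp ⟨j₀, hj₀⟩
      have h7 : (0:ℝ) < |A.det| := abs_pos.mpr hd
      calc |A.det| * ∑ i : {x // x ∈ σ}, W k i.val * x' i
          < |A.det| * (-θ) := by exact mul_lt_mul_of_pos_left h5 h7
        _ = -(θ * |A.det|) := by ring
        _ = wval W (fun _ => θ) σ j₀ := h6.symm
    · intro hcond
      refine ⟨fun i => if h : i ∈ σ then x' ⟨i, h⟩ else 0, ⟨?_, ?_⟩, ?_⟩
      · intro i _
        beta_reduce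
        have hsum : ∑ j, W i j * (if h : j ∈ σ then x' ⟨j, h⟩ else 0)
            = ∑ j : {x // x ∈ σ}, W i j.val * x' j := by
          rw [← Finset.sum_subset (Finset.subset_univ σ)
            (f := fun j => W i j * (if h : j ∈ σ then x' ⟨j, h⟩ else 0))
            (fun j _ hj => by simp [hj])]
          rw [← Finset.sum_coe_sort σ (fun j => W i j * (if h : j ∈ σ then x' ⟨j, h⟩ else 0))]
          exact Finset.sum_congr rfl (fun j _ => by rw [dif_pos j.2])
        by_cases hi : i ∈ σ
        · rw [dif_pos hi, hsum, ← hrow ⟨i, hi⟩]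
          exact (max_eq_right (hp ⟨i, hi⟩).le).symm
        · rw [dif_neg hi, hsum]
          obtain ⟨j, hj, hlt⟩ := hcond i hi
          rw [hwnot hp i hi, hwmem hp ⟨j, hj⟩] at hlt
          have h7 : (0:ℝ) < |A.det| := abs_pos.mpr hd
          have h8 : ∑ j : {x // x ∈ σ}, W i j.val * x' j < -θ := by
            nlinarith
          exact (max_eq_left (by linarith)).symm
      · intro i hi
        exact absurd (Finset.mem_univ i) hi
      · intro i
        constructor
        · intro h
          by_contra hi
          beta_reduce at h
          rw [dif_neg hi] at h
          exact lt_irrefl _ h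
        · intro hi
          beta_reduce
          rw [dif_pos hi]
          exact hp _
end

section
/- One bad apple. Let G be a simple directed graph on [n] with CTLN parameters in the legal range, and let σ ⊆ [n] be partitioned into nonempty sets σ_1,…,σ_N such that for every pair i ≠ j, either every node of σ_i sends an edge in G to every node of σ_j, or no node of σ_i sends an edge to any node of σ_j (i.e. G|_σ is a composite graph with components G|_{σ_1},…,G|_{σ_N}). If σ_i ∉ FP(G|_{σ_i}) for some i ∈ [N] (i.e. some component is a forbidden motif), then σ ∉ FP(G|_σ) (σ is a forbidden motif). -/
open Matrix Finset

/-- **One bad apple.** Let `G` be a simple directed graph with CTLN parameters in the legal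
range, and let `σ` be partitioned into nonempty sets `σ_1, …, σ_N` such that `G|_σ` is a
composite graph with components `G|_{σ_i}` (between any two distinct components, either
all edges are present or none are). If some component `σ_i` is a forbidden motif
(`σ_i ∉ FP(G|_{σ_i})`), then `σ` is a forbidden motif (`σ ∉ FP(G|_σ)`). -/
theorem one_bad_apple {n N : ℕ} (G : Fin n → Fin n → Prop) [DecidableRel G]
    (hGirr : ∀ i, ¬ G i i) (ε δ θ : ℝ)
    (hθ : 0 < θ) (hδ : 0 < δ) (hε : 0 < ε) (hεδ : ε < δ / (δ + 1))
    (W : Matrix (Fin n) (Fin n) ℝ) (hWdef : W = ctlnW G ε δ)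
    (b : Fin n → ℝ) (hbdef : b = fun _ => θ)
    (σ : Finset (Fin n)) (P : Fin N → Finset (Fin n))
    (hne : ∀ i, (P i).Nonempty)
    (hdisj : ∀ i j, i ≠ j → Disjoint (P i) (P j))
    (hcover : σ = Finset.univ.biUnion P)
    (hcomp : ∀ i j : Fin N, i ≠ j →
      ((∀ u ∈ P i, ∀ v ∈ P j, G u v) ∨ (∀ u ∈ P i, ∀ v ∈ P j, ¬ G u v)))
    (hbad : ∃ i : Fin N, ¬ memFP W b (P i) (P i)) :
    ¬ memFP W b σ σ := by
  rintro ⟨x, ⟨hfix, hzero⟩, hsupp⟩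
  obtain ⟨k, hk⟩ := hbad
  apply hk
  have hε1 : ε < 1 := lt_of_lt_of_le hεδ (by rw [div_le_one (by linarith)]; linarith)
  have hWle : ∀ i j, W i j ≤ 0 := by
    intro i j
    rw [hWdef]; simp only [ctlnW, Matrix.of_apply]
    split_ifs <;> linarith
  have hPsub : ∀ i ∈ P k, i ∈ σ := by
    intro i hi; rw [hcover]; exact Finset.mem_biUnion.mpr ⟨k, Finset.mem_univ k, hi⟩
  have hPsub' : P k ⊆ σ := fun i hi => hPsub i hi
  have hxpos : ∀ i ∈ σ, 0 < x i := fun i hi => (hsupp i).mpr hi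
  have hxeq : ∀ i ∈ σ, x i = ∑ j ∈ σ, W i j * x j + b i := by
    intro i hi
    have h := hfix i hi
    have hp := hxpos i hi
    rcases le_or_gt (∑ j ∈ σ, W i j * x j + b i) 0 with h0 | h0
    · rw [max_eq_left h0] at h; linarith
    · rw [max_eq_right h0.le] at h; exact h
  obtain ⟨i0, hi0⟩ := hne k
  have hWconst : ∀ i ∈ P k, ∀ j ∈ σ \ P k, W i j = W i0 j := by
    intro i hi j hj
    obtain ⟨hjσ, hjnk⟩ := Finset.mem_sdiff.mp hj
    rw [hcover] at hjσ
    obtain ⟨l, -, hjl⟩ := Finset.mem_biUnion.mp hjσ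
    have hlk : l ≠ k := fun h => hjnk (h ▸ hjl)
    have hij : i ≠ j := fun h => hjnk (h ▸ hi)
    have hi0j : i0 ≠ j := fun h => hjnk (h ▸ hi0)
    rw [hWdef]; simp only [ctlnW, Matrix.of_apply]
    rcases hcomp l k hlk with hall | hnone
    · rw [if_neg hij, if_neg hi0j, if_pos (hall j hjl i hi), if_pos (hall j hjl i0 hi0)]
    · rw [if_neg hij, if_neg hi0j, if_neg (hnone j hjl i hi), if_neg (hnone j hjl i0 hi0)]
  set T := ∑ j ∈ σ \ P k, W i0 j * x j with hT
  set θk := θ + T with hθk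
  have hsplit : ∀ i ∈ P k, x i = ∑ j ∈ P k, W i j * x j + θk := by
    intro i hi
    have hx := hxeq i (hPsub i hi)
    rw [hbdef] at hx
    have hsum : ∑ j ∈ σ, W i j * x j
        = ∑ j ∈ σ \ P k, W i j * x j + ∑ j ∈ P k, W i j * x j :=
      (Finset.sum_sdiff hPsub').symm
    have hout : ∑ j ∈ σ \ P k, W i j * x j = T := by
      rw [hT]
      exact Finset.sum_congr rfl fun j hj => by rw [hWconst i hi j hj]
    rw [hsum, hout] at hx
    rw [hx]; ring
  have hθkpos : 0 < θk := by
    have hx := hsplit i0 hi0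
    have hsle : ∑ j ∈ P k, W i0 j * x j ≤ 0 :=
      Finset.sum_nonpos fun j hj =>
        mul_nonpos_of_nonpos_of_nonneg (hWle i0 j) (hxpos j (hPsub j hj)).le
    have := hxpos i0 (hPsub i0 hi0)
    linarith
  set c := θ / θk with hc
  have hcpos : 0 < c := div_pos hθ hθkpos
  refine ⟨fun j => if j ∈ P k then c * x j else 0, ⟨?_, ?_⟩, ?_⟩
  · intro i hi
    have harg : ∑ j ∈ P k, W i j * (if j ∈ P k then c * x j else 0) + b i = c * x i := by
      have : ∑ j ∈ P k, W i j * (if j ∈ P k then c * x j else 0)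
          = c * ∑ j ∈ P k, W i j * x j := by
        rw [Finset.mul_sum]
        exact Finset.sum_congr rfl fun j hj => by rw [if_pos hj]; ring
      rw [this, hbdef]
      have hx := hsplit i hi
      have hcθ : c * θk = θ := div_mul_cancel₀ θ hθkpos.ne'
      calc c * ∑ j ∈ P k, W i j * x j + θ
          = c * (∑ j ∈ P k, W i j * x j) + c * θk := by rw [hcθ]
        _ = c * (∑ j ∈ P k, W i j * x j + θk) := by ring
        _ = c * x i := by rw [← hx]
    beta_reduce
    rw [harg, if_pos hi,
      max_eq_right (mul_nonneg hcpos.le (hxpos i (hPsub i hi)).le)]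
  · intro i hi; beta_reduce; rw [if_neg hi]
  · intro i
    by_cases hi : i ∈ P k
    · simp only [if_pos hi]
      exact ⟨fun _ => hi, fun _ => mul_pos hcpos (hxpos i (hPsub i hi))⟩
    · simp only [if_neg hi]
      exact ⟨fun h => absurd rfl h.ne, fun h => absurd h hi⟩
end

section
/- Instability from an unstable uniform in-degree component. Let G be a simple directed graph on [n] with CTLN parameters in the legal range, and let σ ⊆ [n] be partitioned into nonempty sets σ_1,…,σ_N such that for every pair i ≠ j, either every node of σ_i sends an edge in G to every node of σ_j, or no node of σ_i sends an edge to any node of σ_j (i.e. G|_σ is a composite graph with components G|_{σ_1},…,G|_{σ_N}). If some component σ_i has uniform in-degree (every vertex of σ_i has the same number of in-neighbors within G|_{σ_i}) and the matrix I − W_{σ_i} has an eigenvalue with negative real part, then I − W_σ also has an eigenvalue with negative real part (σ is unstable). -/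
open Matrix Finset

lemma charpoly_isRoot_iff' {m R : Type*} [Fintype m] [DecidableEq m] [CommRing R]
    (M : Matrix m m R) (μ : R) :
    (Matrix.charpoly M).IsRoot μ ↔ (μ • (1 : Matrix m m R) - M).det = 0 := by
  have : (Matrix.charpoly M).eval μ = (μ • (1 : Matrix m m R) - M).det := by
    rw [Matrix.charpoly]
    have := (Polynomial.evalRingHom μ).map_det (Matrix.charmatrix M)
    rw [show ((Polynomial.evalRingHom μ) (Matrix.charmatrix M).det)
        = (Matrix.charmatrix M).det.eval μ from rfl] at this
    rw [this]
    congr 1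
    ext i j
    by_cases h : i = j
    · subst h
      simp [Matrix.charmatrix_apply_eq, Matrix.one_apply]
    · simp [Matrix.charmatrix_apply_ne _ _ _ h, Matrix.one_apply_ne h]
  rw [Polynomial.IsRoot, this]

lemma charpoly_isRoot_iff_leftEig {m : Type*} [Fintype m] [DecidableEq m]
    (M : Matrix m m ℂ) (μ : ℂ) :
    (Matrix.charpoly M).IsRoot μ ↔
      ∃ v : m → ℂ, v ≠ 0 ∧ ∀ u, ∑ r, M r u * v r = μ * v u := by
  rw [charpoly_isRoot_iff', ← Matrix.det_transpose, ← Matrix.exists_mulVec_eq_zero_iff]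
  have key : ∀ (v : m → ℂ) (u : m),
      ((μ • (1 : Matrix m m ℂ) - M)ᵀ).mulVec v u = μ * v u - ∑ r, M r u * v r := by
    intro v u
    simp only [Matrix.mulVec, dotProduct, Matrix.transpose_apply, Matrix.sub_apply,
      Matrix.smul_apply, Matrix.one_apply, smul_eq_mul, mul_ite, mul_one, mul_zero,
      sub_mul, ite_mul, zero_mul, Finset.sum_sub_distrib, Finset.sum_ite_eq']
    simp [mul_comm]
  constructor
  · rintro ⟨v, hv, hveq⟩
    refine ⟨v, hv, fun u => ?_⟩
    have := congrFun hveq u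
    rw [key] at this
    simp only [Pi.zero_apply] at this
    exact (sub_eq_zero.mp this).symm
  · rintro ⟨v, hv, hveq⟩
    refine ⟨v, hv, funext fun u => ?_⟩
    rw [key, hveq]
    simp


/-- **Instability from an unstable uniform in-degree component.** Let `G` be a simple
directed graph with CTLN parameters in the legal range, and let `σ` be partitioned into
nonempty sets `σ_1, …, σ_N` forming a composite graph `G|_σ`. If some component `σ_i`
has uniform in-degree and `I − W_{σ_i}` has an eigenvalue with negative real part, then
`I − W_σ` also has an eigenvalue with negative real part. -/
theorem composite_unstable {n N : ℕ} (G : Fin n → Fin n → Prop) [DecidableRel G]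
    (hGirr : ∀ i, ¬ G i i) (ε δ θ : ℝ)
    (hθ : 0 < θ) (hδ : 0 < δ) (hε : 0 < ε) (hεδ : ε < δ / (δ + 1))
    (W : Matrix (Fin n) (Fin n) ℝ) (hWdef : W = ctlnW G ε δ)
    (σ : Finset (Fin n)) (P : Fin N → Finset (Fin n))
    (hne : ∀ i, (P i).Nonempty)
    (hdisj : ∀ i j, i ≠ j → Disjoint (P i) (P j))
    (hcover : σ = Finset.univ.biUnion P)
    (hcomp : ∀ i j : Fin N, i ≠ j →
      ((∀ u ∈ P i, ∀ v ∈ P j, G u v) ∨ (∀ u ∈ P i, ∀ v ∈ P j, ¬ G u v)))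
    (i₀ : Fin N) (d : ℕ)
    (hunif : ∀ v ∈ P i₀, ((P i₀).filter (fun u => G u v)).card = d)
    (hunstable : ∃ μ : ℂ,
      (Matrix.charpoly
        (((1 : Matrix {x // x ∈ P i₀} {x // x ∈ P i₀} ℝ)
            - W.submatrix Subtype.val Subtype.val).map Complex.ofReal)).IsRoot μ ∧
      μ.re < 0) :
    ∃ μ : ℂ,
      (Matrix.charpoly
        (((1 : Matrix {x // x ∈ σ} {x // x ∈ σ} ℝ)
            - W.submatrix Subtype.val Subtype.val).map Complex.ofReal)).IsRoot μ ∧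
      μ.re < 0 := by
  classical
  obtain ⟨μ, hroot, hre⟩ := hunstable
  refine ⟨μ, ?_, hre⟩
  set A : Matrix {x // x ∈ P i₀} {x // x ∈ P i₀} ℂ :=
    ((1 : Matrix {x // x ∈ P i₀} {x // x ∈ P i₀} ℝ)
      - W.submatrix Subtype.val Subtype.val).map Complex.ofReal with hA
  set B : Matrix {x // x ∈ σ} {x // x ∈ σ} ℂ :=
    ((1 : Matrix {x // x ∈ σ} {x // x ∈ σ} ℝ)
      - W.submatrix Subtype.val Subtype.val).map Complex.ofReal with hB
  have hAval : ∀ r u : {x // x ∈ P i₀},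
      A r u = (((if r.val = u.val then (1:ℝ) else 0) - W r.val u.val : ℝ) : ℂ) := by
    intro r u
    simp [hA, Matrix.map_apply, Matrix.sub_apply, Matrix.one_apply]
  have hBval : ∀ q p : {x // x ∈ σ},
      B q p = (((if q.val = p.val then (1:ℝ) else 0) - W q.val p.val : ℝ) : ℂ) := by
    intro q p
    simp [hB, Matrix.map_apply, Matrix.sub_apply, Matrix.one_apply]
  have hε1 : ε < 1 := lt_trans hεδ (by
    rw [div_lt_one (by linarith)]; linarith)
  set m := (P i₀).card with hm
  set ρ : ℝ := 1 + (d : ℝ) * (1 - ε) + ((m - 1 - d : ℕ) : ℝ) * (1 + δ) with hρ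
  have hρpos : 0 < ρ := by
    have h1 : (0:ℝ) ≤ (d : ℝ) * (1 - ε) := mul_nonneg (Nat.cast_nonneg _) (by linarith)
    have h2 : (0:ℝ) ≤ ((m - 1 - d : ℕ) : ℝ) * (1 + δ) :=
      mul_nonneg (Nat.cast_nonneg _) (by linarith)
    rw [hρ]; linarith
  -- real row sums of W on P i₀
  have hrow : ∀ r : {x // x ∈ P i₀},
      ∑ x ∈ P i₀, W r.val x
        = (d : ℝ) * (-1 + ε) + ((m - 1 - d : ℕ) : ℝ) * (-1 - δ) := by
    intro r
    rw [← Finset.sum_erase_add _ _ r.prop]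
    have h0 : W r.val r.val = 0 := by simp [hWdef, ctlnW]
    have hsum : ∑ x ∈ (P i₀).erase r.val, W r.val x
        = ∑ x ∈ (P i₀).erase r.val, (if G x r.val then (-1 + ε) else (-1 - δ)) := by
      refine Finset.sum_congr rfl fun x hx => ?_
      have hxr : x ≠ r.val := Finset.ne_of_mem_erase hx
      simp [hWdef, ctlnW, hxr.symm]
    have hcard1 : (((P i₀).erase r.val).filter (fun x => G x r.val)).card = d := by
      rw [Finset.filter_erase, Finset.erase_eq_of_notMem (by simp [hGirr])]
      exact hunif r.val r.prop
    have hcard2 : (((P i₀).erase r.val).filter (fun x => ¬ G x r.val)).card = m - 1 - d := by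
      have htot := Finset.card_filter_add_card_filter_not
        (s := (P i₀).erase r.val) (p := fun x => G x r.val)
      rw [hcard1, Finset.card_erase_of_mem r.prop] at htot
      omega
    rw [h0, hsum, Finset.sum_ite, Finset.sum_const, Finset.sum_const, hcard1, hcard2]
    simp only [nsmul_eq_mul]
    ring
  -- complex row sums of A
  have hrowC : ∀ r : {x // x ∈ P i₀}, ∑ u, A r u = (ρ : ℂ) := by
    intro r
    have e1 : ∑ u, A r u
        = ((∑ u : {x // x ∈ P i₀},
            ((if r.val = u.val then (1:ℝ) else 0) - W r.val u.val) : ℝ) : ℂ) := by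
      rw [Complex.ofReal_sum]
      exact Finset.sum_congr rfl fun u _ => hAval r u
    rw [e1]
    have e2 : ∑ u : {x // x ∈ P i₀},
        ((if r.val = u.val then (1:ℝ) else 0) - W r.val u.val) = ρ := by
      rw [Finset.sum_sub_distrib]
      have h1 : ∑ u : {x // x ∈ P i₀}, (if r.val = u.val then (1:ℝ) else 0) = 1 := by
        have : ∀ u : {x // x ∈ P i₀}, (if r.val = u.val then (1:ℝ) else 0)
            = if r = u then (1:ℝ) else 0 := by
          intro u; simp
        rw [Finset.sum_congr rfl fun u _ => this u]
        simp
      have h2 : ∑ u : {x // x ∈ P i₀}, W r.val u.val = ∑ x ∈ P i₀, W r.val x :=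
        Finset.sum_coe_sort (P i₀) (fun x => W r.val x)
      rw [h1, h2, hrow r, hρ]
      ring
    rw [e2]
  have hμρ : μ ≠ (ρ : ℂ) := by
    intro h
    rw [h] at hre
    simp at hre
    linarith
  -- left eigenvector
  obtain ⟨v, hv0, hveig⟩ := (charpoly_isRoot_iff_leftEig A μ).mp hroot
  -- zero sum
  have hsum0 : μ * (∑ r, v r) = (ρ : ℂ) * (∑ r, v r) := by
    calc μ * (∑ r, v r) = ∑ u, μ * v u := Finset.mul_sum _ _ _
      _ = ∑ u, ∑ r, A r u * v r := Finset.sum_congr rfl fun u _ => (hveig u).symm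
      _ = ∑ r, ∑ u, A r u * v r := Finset.sum_comm
      _ = ∑ r, (∑ u, A r u) * v r := by simp [Finset.sum_mul]
      _ = ∑ r, (ρ : ℂ) * v r := Finset.sum_congr rfl fun r _ => by rw [hrowC r]
      _ = (ρ : ℂ) * ∑ r, v r := (Finset.mul_sum _ _ _).symm
  have hs : (∑ r, v r) = 0 := by
    by_contra h
    exact hμρ (mul_right_cancel₀ h hsum0)
  -- extension by zero
  have hPσ : ∀ x ∈ P i₀, x ∈ σ := fun x hx => by
    rw [hcover]; exact Finset.mem_biUnion.mpr ⟨i₀, Finset.mem_univ _, hx⟩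
  set F : Fin n → Fin n → ℂ :=
    fun x z => (((if x = z then (1:ℝ) else 0) - W x z : ℝ) : ℂ) with hF
  set g : Fin n → ℂ := fun x => if h : x ∈ P i₀ then v ⟨x, h⟩ else 0 with hg
  have hmain : ∀ p : {x // x ∈ σ}, ∑ q, B q p * g q.val = μ * g p.val := by
    intro p
    have h1 : ∑ q, B q p * g q.val = ∑ x ∈ σ, F x p.val * g x := by
      rw [← Finset.sum_coe_sort σ (fun x => F x p.val * g x)]
      exact Finset.sum_congr rfl fun q _ => by rw [hBval q p]
    have h2 : ∑ x ∈ σ, F x p.val * g x = ∑ x ∈ P i₀, F x p.val * g x :=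
      (Finset.sum_subset hPσ (fun x _ hxn => by simp [hg, hxn])).symm
    have h3 : ∑ x ∈ P i₀, F x p.val * g x
        = ∑ u : {x // x ∈ P i₀}, F u.val p.val * v u := by
      rw [← Finset.sum_coe_sort (P i₀) (fun x => F x p.val * g x)]
      refine Finset.sum_congr rfl fun u _ => ?_
      simp [hg, u.prop]
    rw [h1, h2, h3]
    by_cases hp : p.val ∈ P i₀
    · have hA' : ∀ u : {x // x ∈ P i₀},
          F u.val p.val = A u ⟨p.val, hp⟩ := fun u => (hAval u ⟨p.val, hp⟩).symm
      calc ∑ u : {x // x ∈ P i₀}, F u.val p.val * v u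
          = ∑ u : {x // x ∈ P i₀}, A u ⟨p.val, hp⟩ * v u :=
            Finset.sum_congr rfl fun u _ => by rw [hA' u]
        _ = μ * v ⟨p.val, hp⟩ := hveig _
        _ = μ * g p.val := by rw [hg]; simp [hp]
    · have hpσ : p.val ∈ Finset.univ.biUnion P := by
        rw [← hcover]; exact p.prop
      obtain ⟨j, -, hpj⟩ := Finset.mem_biUnion.mp hpσ
      have hji : j ≠ i₀ := fun h => hp (h ▸ hpj)
      have hgp : g p.val = 0 := by simp [hg, hp]
      rw [hgp, mul_zero]
      have hconst : ∃ c : ℂ, ∀ u : {x // x ∈ P i₀}, F u.val p.val = c := by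
        obtain hc | hc := hcomp j i₀ hji
        · refine ⟨(((0:ℝ) - (-1 + ε) : ℝ) : ℂ), fun u => ?_⟩
          have hne' : u.val ≠ p.val := fun h => hp (h ▸ u.prop)
          have hG : G p.val u.val := hc p.val hpj u.val u.prop
          simp [hF, hWdef, ctlnW, hne', hG]
        · refine ⟨(((0:ℝ) - (-1 - δ) : ℝ) : ℂ), fun u => ?_⟩
          have hne' : u.val ≠ p.val := fun h => hp (h ▸ u.prop)
          have hG : ¬ G p.val u.val := hc p.val hpj u.val u.prop
          simp [hF, hWdef, ctlnW, hne', hG]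
      obtain ⟨c, hc⟩ := hconst
      calc ∑ u : {x // x ∈ P i₀}, F u.val p.val * v u
          = ∑ u : {x // x ∈ P i₀}, c * v u :=
            Finset.sum_congr rfl fun u _ => by rw [hc u]
        _ = c * ∑ u, v u := (Finset.mul_sum _ _ _).symm
        _ = 0 := by rw [hs, mul_zero]
  have hy0 : (fun p : {x // x ∈ σ} => g p.val) ≠ 0 := by
    intro h
    obtain ⟨u, hu⟩ := Function.ne_iff.mp hv0
    apply hu
    have := congrFun h ⟨u.val, hPσ u.val u.prop⟩
    simpa [hg, u.prop] using this
  exact (charpoly_isRoot_iff_leftEig B μ).mpr ⟨_, hy0, hmain⟩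
end

section
/- Strongly forbidden skeleton. Let G be a composite graph on vertex set V = τ_1 ∪ … ∪ τ_N with components G_1,…,G_N and skeleton Ĝ on [N]. If Ĝ is strongly forbidden, i.e. there exist ĵ, k̂ ∈ [N] such that k̂ graphically dominates ĵ with respect to [N] in Ĝ, then G is strongly forbidden: there exist j, k ∈ V such that k graphically dominates j with respect to V in G. More precisely, for any k ∈ τ_{k̂} and any j ∈ τ_{ĵ}, k graphically dominates j with respect to V. -/
open Matrix Finset

/-- **Strongly forbidden skeleton.** Let `G` be a composite graph on vertex set
`V = τ_1 ∪ … ∪ τ_N` with components `G|_{τ_i}` and skeleton `Ĝ` on `[N]`. If the skeleton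
is strongly forbidden (some `k̂` graphically dominates some `ĵ` with respect to `[N]` in
`Ĝ`), then `G` is strongly forbidden; more precisely, every `k ∈ τ_{k̂}` graphically
dominates every `j ∈ τ_{ĵ}` with respect to `V` in `G`. -/
theorem strongly_forbidden_skeleton {n N : ℕ}
    (τ : Fin N → Finset (Fin n)) (hne : ∀ i, (τ i).Nonempty)
    (hdisj : ∀ i j, i ≠ j → Disjoint (τ i) (τ j))
    (G : Fin n → Fin n → Prop) (Ghat : Fin N → Fin N → Prop)
    (hGirr : ∀ u, ¬ G u u) (hGhatirr : ∀ i, ¬ Ghat i i)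
    (hcomp : ∀ i j : Fin N, i ≠ j → ∀ u ∈ τ i, ∀ v ∈ τ j, (G u v ↔ Ghat i j))
    (jh kh : Fin N) (hdom : GraphDominates Ghat Finset.univ kh jh) :
    (∀ k ∈ τ kh, ∀ j ∈ τ jh, GraphDominates G (Finset.univ.biUnion τ) k j) ∧
    (∃ j ∈ Finset.univ.biUnion τ, ∃ k ∈ Finset.univ.biUnion τ,
      GraphDominates G (Finset.univ.biUnion τ) k j) := by
  obtain ⟨-, hdom2, hdom3, hdom4⟩ := hdom
  have hjk : Ghat jh kh := hdom3 (Finset.mem_univ _)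
  have hkj : ¬ Ghat kh jh := hdom4 (Finset.mem_univ _)
  have hne' : jh ≠ kh := fun h => hGhatirr kh (h ▸ hjk)
  have main : ∀ k ∈ τ kh, ∀ j ∈ τ jh, GraphDominates G (Finset.univ.biUnion τ) k j := by
    intro k hk j hj
    have hjV : j ∈ Finset.univ.biUnion τ :=
      Finset.mem_biUnion.mpr ⟨jh, Finset.mem_univ _, hj⟩
    refine ⟨Or.inl hjV, ?_, fun _ => (hcomp jh kh hne' j hj k hk).mpr hjk,
      fun _ hGkj => hkj ((hcomp kh jh hne'.symm k hk j hj).mp hGkj)⟩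
    intro i hiV hij hik hGij
    obtain ⟨m, -, hm⟩ := Finset.mem_biUnion.mp hiV
    by_cases hmj : m = jh
    · subst hmj
      exact (hcomp m kh hne' i hm k hk).mpr hjk
    · have hGhij : Ghat m jh := (hcomp m jh hmj i hm j hj).mp hGij
      by_cases hmk : m = kh
      · exact absurd (hmk ▸ hGhij) hkj
      · exact (hcomp m kh hmk i hm k hk).mpr
          (hdom2 m (Finset.mem_univ _) hmj hmk hGhij)
  obtain ⟨k, hk⟩ := hne kh
  obtain ⟨j, hj⟩ := hne jh
  exact ⟨main, j, Finset.mem_biUnion.mpr ⟨jh, Finset.mem_univ _, hj⟩,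
    k, Finset.mem_biUnion.mpr ⟨kh, Finset.mem_univ _, hk⟩, main k hk j hj⟩
end

section
/- Disjoint unions. Let G be a simple directed graph on [n] with CTLN parameters in the legal range, such that G is the disjoint union of components G_1,…,G_N on vertex sets τ_1,…,τ_N (i.e. [n] = τ_1 ∪ … ∪ τ_N with the τ_i pairwise disjoint and there are no edges of G between distinct components). Then for any nonempty σ ⊆ [n], writing σ_i := σ ∩ τ_i: σ ∈ FP(G) if and only if for every i ∈ [N], either σ_i = ∅ or σ_i ∈ FP(G_i). Moreover, for any σ ∈ FP(G), with σ̂ := {i ∈ [N] : σ_i ≠ ∅}, one has sgn det(I − W_σ) = (−1)^{|σ̂|−1} · Π_{i∈σ̂} sgn det(I − W_{σ_i}). -/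
open Matrix Finset

lemma real_sign_mul (a c : ℝ) : Real.sign (a * c) = Real.sign a * Real.sign c := by
  rcases lt_trichotomy a 0 with ha | rfl | ha <;> rcases lt_trichotomy c 0 with hc | rfl | hc
  · rw [Real.sign_of_pos (mul_pos_of_neg_of_neg ha hc), Real.sign_of_neg ha,
      Real.sign_of_neg hc]; norm_num
  · simp [Real.sign_zero]
  · rw [Real.sign_of_neg (mul_neg_of_neg_of_pos ha hc), Real.sign_of_neg ha,
      Real.sign_of_pos hc]; norm_num
  · simp [Real.sign_zero]
  · simp [Real.sign_zero]
  · simp [Real.sign_zero]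
  · rw [Real.sign_of_neg (mul_neg_of_pos_of_neg ha hc), Real.sign_of_pos ha,
      Real.sign_of_neg hc]; norm_num
  · simp [Real.sign_zero]
  · rw [Real.sign_of_pos (mul_pos ha hc), Real.sign_of_pos ha, Real.sign_of_pos hc]; norm_num

lemma real_sign_prod {α : Type*} (s : Finset α) (f : α → ℝ) :
    Real.sign (∏ i ∈ s, f i) = ∏ i ∈ s, Real.sign (f i) := by
  classical
  induction s using Finset.cons_induction with
  | empty => simp [Real.sign_one]
  | cons a s ha ih => rw [Finset.prod_cons, Finset.prod_cons, real_sign_mul, ih]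

lemma memFP_iff {n : ℕ} (W : Matrix (Fin n) (Fin n) ℝ) (b : Fin n → ℝ)
    (τ σ : Finset (Fin n)) :
    memFP W b τ σ ↔ σ ⊆ τ ∧ ∃ x : Fin n → ℝ, (∀ i, 0 ≤ x i) ∧ (∀ i, 0 < x i ↔ i ∈ σ) ∧
      (∀ i ∈ σ, x i = (∑ j ∈ σ, W i j * x j) + b i) ∧
      (∀ i ∈ τ, i ∉ σ → (∑ j ∈ σ, W i j * x j) + b i ≤ 0) := by
  constructor
  · rintro ⟨x, ⟨hfix, hzero⟩, hsupp⟩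
    have hnn : ∀ i, 0 ≤ x i := by
      intro i
      by_cases hi : i ∈ τ
      · rw [hfix i hi]; exact le_max_left _ _
      · rw [hzero i hi]
    have hx0 : ∀ i, i ∉ σ → x i = 0 := fun i hi =>
      le_antisymm (not_lt.1 fun h => hi ((hsupp i).1 h)) (hnn i)
    have hsub : σ ⊆ τ := by
      intro i hi
      by_contra h
      have h1 := hzero i h
      have h2 := (hsupp i).2 hi
      linarith
    have hsum : ∀ i, ∑ j ∈ τ, W i j * x j = ∑ j ∈ σ, W i j * x j := by
      intro i
      refine (Finset.sum_subset hsub fun j _ hj => ?_).symm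
      rw [hx0 j hj, mul_zero]
    refine ⟨hsub, x, hnn, hsupp, ?_, ?_⟩
    · intro i hi
      have h1 := hfix i (hsub hi)
      rw [hsum] at h1
      have h2 : 0 < x i := (hsupp i).2 hi
      rcases le_or_gt ((∑ j ∈ σ, W i j * x j) + b i) 0 with h | h
      · rw [max_eq_left h] at h1; linarith
      · rw [max_eq_right h.le] at h1; exact h1
    · intro i hiτ hiσ
      have h1 := hfix i hiτ
      rw [hsum, hx0 i hiσ] at h1
      by_contra h
      push_neg at h
      rw [max_eq_right h.le] at h1
      linarith
  · rintro ⟨hsub, x, hnn, hsupp, heq, hineq⟩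
    refine ⟨x, ⟨?_, ?_⟩, hsupp⟩
    · intro i hi
      have hsum : ∑ j ∈ τ, W i j * x j = ∑ j ∈ σ, W i j * x j := by
        refine (Finset.sum_subset hsub fun j _ hj => ?_).symm
        have hxj : x j = 0 := le_antisymm (not_lt.1 fun h => hj ((hsupp j).1 h)) (hnn j)
        rw [hxj, mul_zero]
      rw [hsum]
      by_cases hiσ : i ∈ σ
      · rw [← heq i hiσ]; exact (max_eq_right (hnn i)).symm
      · rw [max_eq_left (hineq i hi hiσ)]
        exact le_antisymm (not_lt.1 fun h => hiσ ((hsupp i).1 h)) (hnn i)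
    · intro i hi
      have hiσ : i ∉ σ := fun h => hi (hsub h)
      exact le_antisymm (not_lt.1 fun h => hiσ ((hsupp i).1 h)) (hnn i)

lemma det_rankOne {ι : Type*} [Fintype ι] [DecidableEq ι] (A : Matrix ι ι ℝ) (z v : ι → ℝ)
    (hz : A *ᵥ z = fun _ => 1) :
    (A + Matrix.vecMulVec (fun _ => 1) v).det = A.det * (1 + ∑ i, v i * z i) := by
  have h1 : A + Matrix.vecMulVec (fun _ => (1:ℝ)) v = A * (1 + Matrix.vecMulVec z v) := by
    rw [Matrix.mul_add, Matrix.mul_one]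
    congr 1
    ext i j
    have hv : (A *ᵥ z) i = 1 := congrFun hz i
    simp only [Matrix.mul_apply, Matrix.vecMulVec_apply]
    calc (1:ℝ) * v j = (∑ k, A i k * z k) * v j := by
          rw [show (∑ k, A i k * z k) = 1 from hv]
      _ = ∑ k, A i k * (z k * v j) := by rw [Finset.sum_mul]; exact Finset.sum_congr rfl fun k _ => by ring
  rw [h1, Matrix.det_mul, Matrix.vecMulVec_eq Unit z v, Matrix.det_one_add_replicateCol_mul_replicateRow]
  congr 1

set_option maxHeartbeats 1600000 in
/-- **Disjoint unions.** Let `G` be a simple directed graph on `[n]` with CTLN parameters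
in the legal range, which is the disjoint union of components `G_1, …, G_N` on vertex sets
`τ_1, …, τ_N` (no edges between distinct components). Then for nonempty `σ ⊆ [n]`, with
`σ_i := σ ∩ τ_i`: `σ ∈ FP(G)` iff for each `i`, either `σ_i = ∅` or `σ_i ∈ FP(G_i)`.
Moreover, for `σ ∈ FP(G)`, with `σ̂ := {i : σ_i ≠ ∅}`,
`sgn det(I − W_σ) = (−1)^{|σ̂|−1} ∏_{i ∈ σ̂} sgn det(I − W_{σ_i})`. -/
theorem disjoint_union_rule {n N : ℕ} (G : Fin n → Fin n → Prop) [DecidableRel G]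
    (hGirr : ∀ i, ¬ G i i) (ε δ θ : ℝ)
    (hθ : 0 < θ) (hδ : 0 < δ) (hε : 0 < ε) (hεδ : ε < δ / (δ + 1))
    (W : Matrix (Fin n) (Fin n) ℝ) (hWdef : W = ctlnW G ε δ)
    (b : Fin n → ℝ) (hbdef : b = fun _ => θ)
    (τ : Fin N → Finset (Fin n)) (hne : ∀ i, (τ i).Nonempty)
    (hdisj : ∀ i j, i ≠ j → Disjoint (τ i) (τ j))
    (hcover : Finset.univ.biUnion τ = Finset.univ)
    (hnoedges : ∀ i j : Fin N, i ≠ j → ∀ u ∈ τ i, ∀ v ∈ τ j, ¬ G u v)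
    (σ : Finset (Fin n)) (hσ : σ.Nonempty) :
    (memFP W b Finset.univ σ ↔
      ∀ i : Fin N, σ ∩ τ i = ∅ ∨ memFP W b (τ i) (σ ∩ τ i)) ∧
    (memFP W b Finset.univ σ →
      Real.sign (detIW W σ) =
        (-1 : ℝ) ^ ((Finset.univ.filter (fun i : Fin N => (σ ∩ τ i).Nonempty)).card - 1) *
          ∏ i ∈ Finset.univ.filter (fun i : Fin N => (σ ∩ τ i).Nonempty),
            Real.sign (detIW W (σ ∩ τ i))) := by
  classical
  have hbθ : ∀ i, b i = θ := fun i => by rw [hbdef]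
  have hδ1 : (0:ℝ) < 1 + δ := by linarith
  have hε1 : ε < 1 := hεδ.trans ((div_lt_one (by linarith)).2 (by linarith))
  have hWle : ∀ p q, W p q ≤ 0 := by
    intro p q
    rw [hWdef]
    simp only [ctlnW, Matrix.of_apply]
    split_ifs <;> linarith
  have hWge : ∀ p q, -1 - δ ≤ W p q := by
    intro p q
    rw [hWdef]
    simp only [ctlnW, Matrix.of_apply]
    split_ifs <;> linarith
  have hWdiag : ∀ p, W p p = 0 := by
    intro p
    rw [hWdef]
    simp [ctlnW]
  have hWcross : ∀ {i k : Fin N} {p q : Fin n}, i ≠ k → p ∈ τ i → q ∈ τ k → W p q = -1 - δ := by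
    intro i k p q hik hp hq
    have hpq : p ≠ q := fun h => Finset.disjoint_left.mp (hdisj i k hik) hp (h ▸ hq)
    have hG : ¬ G q p := hnoedges k i (Ne.symm hik) q hq p hp
    rw [hWdef]
    simp [ctlnW, hpq, hG]
  have hcomp : ∀ u : Fin n, ∃ k, u ∈ τ k := by
    intro u
    have hu : u ∈ Finset.univ.biUnion τ := by rw [hcover]; exact Finset.mem_univ u
    rcases Finset.mem_biUnion.mp hu with ⟨k, _, hk⟩
    exact ⟨k, hk⟩
  have huniq : ∀ {i k : Fin N} {u : Fin n}, u ∈ τ i → u ∈ τ k → i = k := by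
    intro i k u hi hk
    by_contra h
    exact Finset.disjoint_left.mp (hdisj i k h) hi hk
  have hsplit : ∀ (x : Fin n → ℝ) (k : Fin N) (u : Fin n), u ∈ τ k →
      ∑ j ∈ σ, W u j * x j
        = (∑ j ∈ σ ∩ τ k, W u j * x j)
          + (-1 - δ) * ((∑ j ∈ σ, x j) - ∑ j ∈ σ ∩ τ k, x j) := by
    intro x k u hu
    have h1 : ∑ j ∈ σ \ τ k, W u j * x j = ∑ j ∈ σ \ τ k, (-1 - δ) * x j := by
      refine Finset.sum_congr rfl fun j hj => ?_
      rcases Finset.mem_sdiff.mp hj with ⟨hjσ, hjτ⟩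
      rcases hcomp j with ⟨l, hl⟩
      rw [hWcross (show k ≠ l from fun h => hjτ (h ▸ hl)) hu hl]
    have h2 : ∑ j ∈ σ \ τ k, x j = (∑ j ∈ σ, x j) - ∑ j ∈ σ ∩ τ k, x j := by
      have := Finset.sum_inter_add_sum_sdiff σ (τ k) x
      linarith
    rw [← Finset.sum_inter_add_sum_sdiff σ (τ k) (fun j => W u j * x j), h1, ← Finset.mul_sum, h2]
  -- ===================== Part 1, forward =====================
  have hfwd : memFP W b Finset.univ σ →
      ∀ i : Fin N, σ ∩ τ i = ∅ ∨ memFP W b (τ i) (σ ∩ τ i) := by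
    intro hfp i
    by_cases hemp : σ ∩ τ i = ∅
    · exact Or.inl hemp
    right
    obtain ⟨-, x, hnn, hsupp, heq, hineq⟩ := (memFP_iff W b _ σ).mp hfp
    simp only [hbθ] at heq hineq
    set S : ℝ := ∑ j ∈ σ, x j with hS
    set Si : ℝ := ∑ j ∈ σ ∩ τ i, x j with hSi
    set θi : ℝ := θ - (1 + δ) * (S - Si) with hθi
    have hkey : ∀ u ∈ τ i, (∑ j ∈ σ, W u j * x j) + θ = (∑ j ∈ σ ∩ τ i, W u j * x j) + θi := by
      intro u hu
      rw [hsplit x i u hu, hθi]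
      ring
    obtain ⟨u0, hu0⟩ := Finset.nonempty_of_ne_empty hemp
    have hu0σ : u0 ∈ σ := (Finset.mem_inter.mp hu0).1
    have hu0τ : u0 ∈ τ i := (Finset.mem_inter.mp hu0).2
    have hθipos : 0 < θi := by
      have h1 : x u0 = (∑ j ∈ σ, W u0 j * x j) + θ := heq u0 hu0σ
      rw [hkey u0 hu0τ] at h1
      have h2 : (∑ j ∈ σ ∩ τ i, W u0 j * x j) ≤ 0 :=
        Finset.sum_nonpos fun j _ => mul_nonpos_of_nonpos_of_nonneg (hWle u0 j) (hnn j)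
      have h3 : 0 < x u0 := (hsupp u0).mpr hu0σ
      linarith
    refine (memFP_iff W b _ _).mpr ⟨Finset.inter_subset_right, 
      fun v => if v ∈ σ ∩ τ i then θ / θi * x v else 0, ?_, ?_, ?_, ?_⟩
    · intro v
      dsimp only
      split_ifs with h
      · exact mul_nonneg (div_pos hθ hθipos).le (hnn v)
      · exact le_refl 0
    · intro v
      dsimp only
      split_ifs with h
      · exact iff_of_true
          (mul_pos (div_pos hθ hθipos) ((hsupp v).mpr (Finset.mem_inter.mp h).1)) h
      · exact iff_of_false (lt_irrefl 0) h
    · intro u hu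
      have huσ := (Finset.mem_inter.mp hu).1
      have huτ := (Finset.mem_inter.mp hu).2
      have h1 : x u = (∑ j ∈ σ ∩ τ i, W u j * x j) + θi := by
        have := heq u huσ
        rwa [hkey u huτ] at this
      have hsum : ∑ j ∈ σ ∩ τ i, W u j * (if j ∈ σ ∩ τ i then θ / θi * x j else 0)
          = θ / θi * ∑ j ∈ σ ∩ τ i, W u j * x j := by
        rw [Finset.mul_sum]
        refine Finset.sum_congr rfl fun j hj => ?_
        rw [if_pos hj]; ring
      dsimp only
      rw [if_pos hu, hsum, hbθ, h1]
      field_simp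
    · intro u huτ huσ
      have huσ' : u ∉ σ := fun h => huσ (Finset.mem_inter.mpr ⟨h, huτ⟩)
      have h1 : (∑ j ∈ σ, W u j * x j) + θ ≤ 0 := hineq u (Finset.mem_univ u) huσ'
      rw [hkey u huτ] at h1
      have hsum : ∑ j ∈ σ ∩ τ i, W u j * (if j ∈ σ ∩ τ i then θ / θi * x j else 0)
          = θ / θi * ∑ j ∈ σ ∩ τ i, W u j * x j := by
        rw [Finset.mul_sum]
        refine Finset.sum_congr rfl fun j hj => ?_
        rw [if_pos hj]; ring
      dsimp only
      rw [hsum, hbθ]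
      have hpos : 0 < θ / θi := div_pos hθ hθipos
      have h2 : (∑ j ∈ σ ∩ τ i, W u j * x j) ≤ -θi := by linarith
      have h3 := mul_le_mul_of_nonneg_left h2 hpos.le
      have h4 : θ / θi * (-θi) = -θ := by field_simp
      linarith
  -- ===================== Part 1, backward =====================
  have hbwd : (∀ i : Fin N, σ ∩ τ i = ∅ ∨ memFP W b (τ i) (σ ∩ τ i)) →
      memFP W b Finset.univ σ := by
    intro h
    set m : Finset (Fin N) := Finset.univ.filter (fun i : Fin N => (σ ∩ τ i).Nonempty) with hm
    have hmem : ∀ i ∈ m, memFP W b (τ i) (σ ∩ τ i) := by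
      intro i hi
      rcases h i with h0 | h1
      · rw [hm, Finset.mem_filter] at hi
        exact absurd h0 (Finset.nonempty_iff_ne_empty.mp hi.2)
      · exact h1
    have hex : ∀ i : Fin N, ∃ y : Fin n → ℝ, i ∈ m →
        (∀ v, 0 ≤ y v) ∧ (∀ v, 0 < y v ↔ v ∈ σ ∩ τ i) ∧
        (∀ u ∈ σ ∩ τ i, y u = (∑ j ∈ σ ∩ τ i, W u j * y j) + θ) ∧
        (∀ u ∈ τ i, u ∉ σ ∩ τ i → (∑ j ∈ σ ∩ τ i, W u j * y j) + θ ≤ 0) := by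
      intro i
      by_cases hi : i ∈ m
      · obtain ⟨-, y, h1, h2, h3, h4⟩ := (memFP_iff W b _ _).mp (hmem i hi)
        simp only [hbθ] at h3 h4
        exact ⟨y, fun _ => ⟨h1, h2, h3, h4⟩⟩
      · exact ⟨0, fun hh => absurd hh hi⟩
    choose y hy using hex
    set T : Fin N → ℝ := fun i => ∑ j ∈ σ ∩ τ i, y i j with hT
    set d : Fin N → ℝ := fun i => θ - (1 + δ) * T i with hd
    have hTpos : ∀ i ∈ m, 0 < T i := by
      intro i hi
      obtain ⟨h1, h2, h3, h4⟩ := hy i hi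
      obtain ⟨u, hu⟩ := (Finset.mem_filter.mp hi).2
      exact Finset.sum_pos' (fun j _ => h1 j) ⟨u, hu, (h2 u).mpr hu⟩
    have hdneg : ∀ i ∈ m, d i < 0 := by
      intro i hi
      obtain ⟨h1, h2, h3, h4⟩ := hy i hi
      obtain ⟨u, hu⟩ := (Finset.mem_filter.mp hi).2
      have hyu : 0 < y i u := (h2 u).mpr hu
      have heq := h3 u hu
      have hbound : (-1 - δ) * (T i - y i u) ≤ ∑ j ∈ σ ∩ τ i, W u j * y i j := by
        have e1 : ∑ j ∈ (σ ∩ τ i).erase u, W u j * y i j = ∑ j ∈ σ ∩ τ i, W u j * y i j :=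
          Finset.sum_erase _ (by rw [hWdiag u, zero_mul])
        have e2 : ∑ j ∈ (σ ∩ τ i).erase u, y i j = T i - y i u := by
          rw [hT]; exact Finset.sum_erase_eq_sub hu
        rw [← e1]
        calc (-1 - δ) * (T i - y i u) = ∑ j ∈ (σ ∩ τ i).erase u, (-1 - δ) * y i j := by
              rw [← Finset.mul_sum, e2]
          _ ≤ ∑ j ∈ (σ ∩ τ i).erase u, W u j * y i j :=
              Finset.sum_le_sum fun j _ => mul_le_mul_of_nonneg_right (hWge u j) (h1 j)
      have hdi : d i = θ - (1 + δ) * T i := by rw [hd]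
      nlinarith
    have hmne : m.Nonempty := by
      obtain ⟨u, hu⟩ := hσ
      obtain ⟨k, hk⟩ := hcomp u
      exact ⟨k, by
        rw [hm, Finset.mem_filter]
        exact ⟨Finset.mem_univ k, ⟨u, Finset.mem_inter.mpr ⟨hu, hk⟩⟩⟩⟩
    set E : ℝ := 1 + (1 + δ) * ∑ k ∈ m, T k / d k with hE
    have hEneg : E < 0 := by
      have hterm : ∀ k ∈ m, (1 + δ) * (T k / d k) < -1 := by
        intro k hk
        have h1 := hdneg k hk
        have h2 := hTpos k hk
        have h3 : ((1 + δ) * T k) / d k < -1 := by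
          rw [div_lt_iff_of_neg h1]
          have hdk : d k = θ - (1 + δ) * T k := by rw [hd]
          nlinarith
        rw [mul_div_assoc] at h3
        exact h3
      have hsum : ∑ k ∈ m, (1 + δ) * (T k / d k) < ∑ _k ∈ m, (-1 : ℝ) :=
        Finset.sum_lt_sum_of_nonempty hmne hterm
      rw [Finset.sum_const, nsmul_eq_mul] at hsum
      have hcard : (1:ℝ) ≤ (m.card : ℝ) := by
        exact_mod_cast Nat.one_le_iff_ne_zero.mpr (Finset.card_ne_zero_of_mem hmne.choose_spec)
      rw [hE, Finset.mul_sum]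
      have : ∑ k ∈ m, (1 + δ) * (T k / d k) ≤ -1 := by nlinarith
      linarith
    set t : ℝ := θ / E with ht
    have htneg : t < 0 := div_neg_of_pos_of_neg hθ hEneg
    set c : Fin N → ℝ := fun i => t / d i with hc
    have hcpos : ∀ i ∈ m, 0 < c i := by
      intro i hi
      rw [hc]
      exact div_pos_iff.mpr (Or.inr ⟨htneg, hdneg i hi⟩)
    set x : Fin n → ℝ := fun u => ∑ i ∈ m, c i * y i u with hx
    have hy0 : ∀ i ∈ m, ∀ u, u ∉ σ ∩ τ i → y i u = 0 := by
      intro i hi u hu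
      obtain ⟨h1, h2, -, -⟩ := hy i hi
      exact le_antisymm (not_lt.1 fun hp => hu ((h2 u).mp hp)) (h1 u)
    have hxval : ∀ k ∈ m, ∀ u ∈ τ k, x u = c k * y k u := by
      intro k hk u hu
      rw [hx]
      refine Finset.sum_eq_single_of_mem k hk fun i hi hik => ?_
      have hui : u ∉ σ ∩ τ i := fun hmem' => hik (huniq (Finset.mem_inter.mp hmem').2 hu)
      rw [hy0 i hi u hui, mul_zero]
    have hxnn : ∀ u, 0 ≤ x u := by
      intro u
      exact Finset.sum_nonneg fun i hi => mul_nonneg (hcpos i hi).le ((hy i hi).1 u)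
    have hxsupp : ∀ u, 0 < x u ↔ u ∈ σ := by
      intro u
      obtain ⟨k, hk⟩ := hcomp u
      by_cases huσ : u ∈ σ
      · have hkm : k ∈ m := by
          rw [hm, Finset.mem_filter]
          exact ⟨Finset.mem_univ k, ⟨u, Finset.mem_inter.mpr ⟨huσ, hk⟩⟩⟩
        rw [hxval k hkm u hk]
        exact iff_of_true
          (mul_pos (hcpos k hkm) (((hy k hkm).2.1 u).mpr (Finset.mem_inter.mpr ⟨huσ, hk⟩))) huσ
      · refine iff_of_false ?_ huσ
        have hzero : x u = 0 := by
          rw [hx]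
          exact Finset.sum_eq_zero fun i hi => by
            rw [hy0 i hi u (fun hmem' => huσ (Finset.mem_inter.mp hmem').1), mul_zero]
        rw [hzero]
        exact lt_irrefl 0
    have hsumx : ∀ k ∈ m, ∑ j ∈ σ ∩ τ k, x j = c k * T k := by
      intro k hk
      rw [hT]
      calc ∑ j ∈ σ ∩ τ k, x j = ∑ j ∈ σ ∩ τ k, c k * y k j :=
            Finset.sum_congr rfl fun j hj => hxval k hk j (Finset.mem_inter.mp hj).2
        _ = c k * ∑ j ∈ σ ∩ τ k, y k j := by rw [Finset.mul_sum]
    have hsumxall : ∑ j ∈ σ, x j = ∑ i ∈ m, c i * T i := by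
      rw [hx]
      rw [Finset.sum_comm]
      refine Finset.sum_congr rfl fun i hi => ?_
      rw [← Finset.mul_sum]
      congr 1
      rw [hT]
      exact (Finset.sum_subset Finset.inter_subset_left fun j hj hj' => hy0 i hi j
        (fun hmem' => hj' hmem')).symm
    have hCsum : (1 + δ) * (∑ i ∈ m, c i * T i) = t * (E - 1) := by
      have hE1 : E - 1 = (1 + δ) * ∑ k ∈ m, T k / d k := by rw [hE]; ring
      rw [hE1, Finset.mul_sum, Finset.mul_sum, Finset.mul_sum]
      refine Finset.sum_congr rfl fun i hi => ?_
      have hdne : d i ≠ 0 := ne_of_lt (hdneg i hi)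
      rw [hc]
      field_simp
    have htE : t * E = θ := by
      rw [ht, div_mul_cancel₀ θ (ne_of_lt hEneg)]
    have hCkey : ∀ k ∈ m, θ - c k * θ + (1 + δ) * (c k * T k)
        - (1 + δ) * (∑ i ∈ m, c i * T i) = 0 := by
      intro k hk
      have h1 : c k * d k = t := by
        rw [hc]
        exact div_mul_cancel₀ t (ne_of_lt (hdneg k hk))
      have h1' : c k * θ - (1 + δ) * (c k * T k) = t := by
        have hdk : d k = θ - (1 + δ) * T k := by rw [hd]
        calc c k * θ - (1 + δ) * (c k * T k) = c k * d k := by rw [hdk]; ring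
          _ = t := h1
      linarith [hCsum, htE]
    refine (memFP_iff W b _ _).mpr ⟨Finset.subset_univ σ, x, hxnn, hxsupp, ?_, ?_⟩
    · intro u huσ
      obtain ⟨k, hk⟩ := hcomp u
      have hkm : k ∈ m := by
        rw [hm, Finset.mem_filter]
        exact ⟨Finset.mem_univ k, ⟨u, Finset.mem_inter.mpr ⟨huσ, hk⟩⟩⟩
      have hu' : u ∈ σ ∩ τ k := Finset.mem_inter.mpr ⟨huσ, hk⟩
      have hyeq := (hy k hkm).2.2.1 u hu'
      have hsumW : ∑ j ∈ σ ∩ τ k, W u j * x j = c k * (y k u - θ) := by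
        calc ∑ j ∈ σ ∩ τ k, W u j * x j = ∑ j ∈ σ ∩ τ k, c k * (W u j * y k j) :=
              Finset.sum_congr rfl fun j hj => by
                rw [hxval k hkm j (Finset.mem_inter.mp hj).2]; ring
          _ = c k * ∑ j ∈ σ ∩ τ k, W u j * y k j := by rw [Finset.mul_sum]
          _ = c k * (y k u - θ) := by rw [show ∑ j ∈ σ ∩ τ k, W u j * y k j = y k u - θ by linarith]
      rw [hbθ, hsplit x k u hk, hsumxall, hsumx k hkm, hsumW, hxval k hkm u hk]
      have := hCkey k hkm
      nlinarith [hCkey k hkm]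
    · intro u _ huσ
      obtain ⟨k, hk⟩ := hcomp u
      rw [hbθ, hsplit x k u hk, hsumxall]
      by_cases hkm : k ∈ m
      · have hu' : u ∉ σ ∩ τ k := fun hh => huσ (Finset.mem_inter.mp hh).1
        have hineq' := (hy k hkm).2.2.2 u hk hu'
        have hsumW : ∑ j ∈ σ ∩ τ k, W u j * x j = c k * ∑ j ∈ σ ∩ τ k, W u j * y k j := by
          calc ∑ j ∈ σ ∩ τ k, W u j * x j = ∑ j ∈ σ ∩ τ k, c k * (W u j * y k j) :=
                Finset.sum_congr rfl fun j hj => by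
                  rw [hxval k hkm j (Finset.mem_inter.mp hj).2]; ring
            _ = c k * ∑ j ∈ σ ∩ τ k, W u j * y k j := by rw [Finset.mul_sum]
        rw [hsumx k hkm, hsumW]
        have hck := hcpos k hkm
        have h5 : c k * (∑ j ∈ σ ∩ τ k, W u j * y k j) ≤ c k * (-θ) :=
          mul_le_mul_of_nonneg_left (by linarith) hck.le
        nlinarith [hCkey k hkm]
      · have hempty : σ ∩ τ k = ∅ := by
          by_contra hne'
          exact hkm (by
            rw [hm, Finset.mem_filter]
            exact ⟨Finset.mem_univ k, Finset.nonempty_of_ne_empty hne'⟩)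
        rw [hempty]
        simp only [Finset.sum_empty]
        nlinarith [hCsum, htE, htneg]
  -- ===================== Part 2 =====================
  have hdet : memFP W b Finset.univ σ →
      Real.sign (detIW W σ) =
        (-1 : ℝ) ^ ((Finset.univ.filter (fun i : Fin N => (σ ∩ τ i).Nonempty)).card - 1) *
          ∏ i ∈ Finset.univ.filter (fun i : Fin N => (σ ∩ τ i).Nonempty),
            Real.sign (detIW W (σ ∩ τ i)) := by
    intro hfp
    set m : Finset (Fin N) := Finset.univ.filter (fun i : Fin N => (σ ∩ τ i).Nonempty) with hm
    have hmne : m.Nonempty := by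
      obtain ⟨u, hu⟩ := hσ
      obtain ⟨k, hk⟩ := hcomp u
      exact ⟨k, by
        rw [hm, Finset.mem_filter]
        exact ⟨Finset.mem_univ k, ⟨u, Finset.mem_inter.mpr ⟨hu, hk⟩⟩⟩⟩
    obtain ⟨-, x, hnn, hsupp, heq, hineq⟩ := (memFP_iff W b _ σ).mp hfp
    simp only [hbθ] at heq hineq
    set S : ℝ := ∑ j ∈ σ, x j with hS
    set t0 : ℝ := θ - (1 + δ) * S with ht0def
    set Sk : Fin N → ℝ := fun k => ∑ j ∈ σ ∩ τ k, x j with hSk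
    set θB : Fin N → ℝ := fun k => θ - (1 + δ) * (S - Sk k) with hθB
    have hkeyeq : ∀ k : Fin N, ∀ u ∈ σ ∩ τ k,
        x u = (∑ j ∈ σ ∩ τ k, W u j * x j) + θB k := by
      intro k u hu
      have h0 := heq u (Finset.mem_inter.mp hu).1
      rw [hsplit x k u (Finset.mem_inter.mp hu).2] at h0
      rw [h0]
      simp only [hθB, hSk, hS]
      ring
    have hθBpos : ∀ k ∈ m, 0 < θB k := by
      intro k hk
      obtain ⟨u, hu⟩ := (Finset.mem_filter.mp hk).2
      have h2 : (∑ j ∈ σ ∩ τ k, W u j * x j) ≤ 0 :=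
        Finset.sum_nonpos fun j _ => mul_nonpos_of_nonpos_of_nonneg (hWle u j) (hnn j)
      have h3 : 0 < x u := (hsupp u).mpr (Finset.mem_inter.mp hu).1
      have h4 := hkeyeq k u hu
      linarith
    have ht0neg : t0 < 0 := by
      obtain ⟨u, huσ⟩ := hσ
      obtain ⟨k, hk⟩ := hcomp u
      have hu' : u ∈ σ ∩ τ k := Finset.mem_inter.mpr ⟨huσ, hk⟩
      have heqk := hkeyeq k u hu'
      have hbound : (-1 - δ) * (Sk k - x u) ≤ ∑ j ∈ σ ∩ τ k, W u j * x j := by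
        have e1 : ∑ j ∈ (σ ∩ τ k).erase u, W u j * x j = ∑ j ∈ σ ∩ τ k, W u j * x j :=
          Finset.sum_erase _ (by rw [hWdiag u, zero_mul])
        have e2 : ∑ j ∈ (σ ∩ τ k).erase u, x j = Sk k - x u := by
          rw [hSk]; exact Finset.sum_erase_eq_sub hu'
        rw [← e1]
        calc (-1 - δ) * (Sk k - x u) = ∑ j ∈ (σ ∩ τ k).erase u, (-1 - δ) * x j := by
              rw [← Finset.mul_sum, e2]
          _ ≤ _ := Finset.sum_le_sum fun j _ => mul_le_mul_of_nonneg_right (hWge u j) (hnn j)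
      have hxu : 0 < x u := (hsupp u).mpr huσ
      have hθBk : θB k = θ - (1 + δ) * (S - Sk k) := by rw [hθB]
      rw [ht0def]
      nlinarith [heqk, hbound, hxu, hθBk]
    have ht0ne : t0 ≠ 0 := ne_of_lt ht0neg
    have hcompm : ∀ p : {v // v ∈ σ}, ∃ k, k ∈ m ∧ (p : Fin n) ∈ τ k := by
      intro p
      obtain ⟨k, hk⟩ := hcomp p.1
      refine ⟨k, ?_, hk⟩
      rw [hm, Finset.mem_filter]
      exact ⟨Finset.mem_univ k, ⟨p.1, Finset.mem_inter.mpr ⟨p.2, hk⟩⟩⟩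
    choose cmp hcmp1 hcmp2 using hcompm
    set D : Matrix {v // v ∈ σ} {v // v ∈ σ} ℝ :=
      Matrix.of (fun p q : {v // v ∈ σ} =>
        (if (p : Fin n) = (q : Fin n) then (1:ℝ) else 0) - W p.1 q.1 - (1 + δ)) with hD
    have hMD : ((1 : Matrix {v // v ∈ σ} {v // v ∈ σ} ℝ) - W.submatrix Subtype.val Subtype.val)
        = D + Matrix.vecMulVec (fun _ => 1) (fun _ => (1 + δ)) := by
      ext p q
      simp only [hD, Matrix.sub_apply, Matrix.add_apply, Matrix.of_apply,
        Matrix.vecMulVec_apply, Matrix.one_apply, Matrix.submatrix_apply, Subtype.ext_iff]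
      ring
    have hDz : D *ᵥ (fun p : {v // v ∈ σ} => x p.1 / t0) = fun _ => 1 := by
      funext p
      have hp : p.1 ∈ σ := p.2
      show ∑ q : {v // v ∈ σ}, D p q * (x q.1 / t0) = 1
      have e1 : ∑ q : {v // v ∈ σ}, D p q * (x q.1 / t0)
          = ∑ j ∈ σ, ((if p.1 = j then (1:ℝ) else 0) - W p.1 j - (1 + δ)) * (x j / t0) := by
        rw [← Finset.sum_coe_sort σ
          (fun j => ((if p.1 = j then (1:ℝ) else 0) - W p.1 j - (1 + δ)) * (x j / t0))]
        simp only [hD, Matrix.of_apply]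
      have e2 : ∀ j ∈ σ, ((if p.1 = j then (1:ℝ) else 0) - W p.1 j - (1 + δ)) * (x j / t0)
          = ((if p.1 = j then x j else 0) - W p.1 j * x j - (1 + δ) * x j) / t0 := by
        intro j _; split_ifs <;> ring
      rw [e1, Finset.sum_congr rfl e2, ← Finset.sum_div, Finset.sum_sub_distrib,
        Finset.sum_sub_distrib, Finset.sum_ite_eq σ p.1 (fun j => x j), if_pos hp,
        ← Finset.mul_sum]
      have hnum : x p.1 - (∑ j ∈ σ, W p.1 j * x j) - (1 + δ) * (∑ j ∈ σ, x j) = t0 := by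
        have h7 := heq p.1 hp
        rw [ht0def, hS]
        linarith
      rw [hnum, div_self ht0ne]
    have htop : detIW W σ = D.det * (θ / t0) := by
      rw [detIW, hMD, det_rankOne D (fun p : {v // v ∈ σ} => x p.1 / t0) _ hDz]
      congr 1
      have e3 : ∑ p : {v // v ∈ σ}, (1 + δ) * (x p.1 / t0)
          = ∑ j ∈ σ, (1 + δ) * (x j / t0) := by
        rw [← Finset.sum_coe_sort σ (fun j => (1 + δ) * (x j / t0))]
      have e4 : ∑ j ∈ σ, (1 + δ) * (x j / t0) = (1 + δ) * S / t0 := by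
        rw [hS, Finset.mul_sum, Finset.sum_div]
        exact Finset.sum_congr rfl fun j _ => by ring
      have h8 : θ = t0 + (1 + δ) * S := by rw [ht0def]; ring
      rw [e3, e4, h8, add_div, div_self ht0ne]
    set DB : (k : Fin N) → Matrix {v // v ∈ σ ∩ τ k} {v // v ∈ σ ∩ τ k} ℝ :=
      fun k => Matrix.of (fun p q : {v // v ∈ σ ∩ τ k} =>
        (if (p : Fin n) = (q : Fin n) then (1:ℝ) else 0) - W p.1 q.1 - (1 + δ)) with hDB
    have hblock : ∀ k ∈ m, detIW W (σ ∩ τ k) = (DB k).det * (θB k / t0) := by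
      intro k hk
      have hABk : ((1 : Matrix {v // v ∈ σ ∩ τ k} {v // v ∈ σ ∩ τ k} ℝ)
          - W.submatrix Subtype.val Subtype.val)
          = DB k + Matrix.vecMulVec (fun _ => 1) (fun _ => (1 + δ)) := by
        ext p q
        simp only [hDB, Matrix.sub_apply, Matrix.add_apply, Matrix.of_apply,
          Matrix.vecMulVec_apply, Matrix.one_apply, Matrix.submatrix_apply, Subtype.ext_iff]
        ring
      have hBz : DB k *ᵥ (fun p : {v // v ∈ σ ∩ τ k} => x p.1 / t0) = fun _ => 1 := by
        funext p
        have hp : p.1 ∈ σ ∩ τ k := p.2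
        show ∑ q : {v // v ∈ σ ∩ τ k}, DB k p q * (x q.1 / t0) = 1
        have e1 : ∑ q : {v // v ∈ σ ∩ τ k}, DB k p q * (x q.1 / t0)
            = ∑ j ∈ σ ∩ τ k, ((if p.1 = j then (1:ℝ) else 0) - W p.1 j - (1 + δ)) * (x j / t0) := by
          rw [← Finset.sum_coe_sort (σ ∩ τ k)
            (fun j => ((if p.1 = j then (1:ℝ) else 0) - W p.1 j - (1 + δ)) * (x j / t0))]
          simp only [hDB, Matrix.of_apply]
        have e2 : ∀ j ∈ σ ∩ τ k,
            ((if p.1 = j then (1:ℝ) else 0) - W p.1 j - (1 + δ)) * (x j / t0)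
            = ((if p.1 = j then x j else 0) - W p.1 j * x j - (1 + δ) * x j) / t0 := by
          intro j _; split_ifs <;> ring
        rw [e1, Finset.sum_congr rfl e2, ← Finset.sum_div, Finset.sum_sub_distrib,
          Finset.sum_sub_distrib, Finset.sum_ite_eq (σ ∩ τ k) p.1 (fun j => x j), if_pos hp,
          ← Finset.mul_sum]
        have hnum : x p.1 - (∑ j ∈ σ ∩ τ k, W p.1 j * x j)
            - (1 + δ) * (∑ j ∈ σ ∩ τ k, x j) = t0 := by
          have h7 := hkeyeq k p.1 hp
          simp only [hθB, hSk, hS] at h7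
          rw [ht0def, hS]
          linear_combination h7
        rw [hnum, div_self ht0ne]
      rw [detIW, hABk, det_rankOne (DB k) (fun p : {v // v ∈ σ ∩ τ k} => x p.1 / t0) _ hBz]
      congr 1
      have e3 : ∑ p : {v // v ∈ σ ∩ τ k}, (1 + δ) * (x p.1 / t0)
          = ∑ j ∈ σ ∩ τ k, (1 + δ) * (x j / t0) := by
        rw [← Finset.sum_coe_sort (σ ∩ τ k) (fun j => (1 + δ) * (x j / t0))]
      have e4 : ∑ j ∈ σ ∩ τ k, (1 + δ) * (x j / t0) = (1 + δ) * Sk k / t0 := by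
        have hSkk : Sk k = ∑ j ∈ σ ∩ τ k, x j := by rw [hSk]
        rw [hSkk, Finset.mul_sum, Finset.sum_div]
        exact Finset.sum_congr rfl fun j _ => by ring
      have h8 : θB k = t0 + (1 + δ) * Sk k := by
        simp only [hθB, ht0def]; ring
      rw [e3, e4, h8, add_div, div_self ht0ne]
    have hBT : D.BlockTriangular cmp := by
      intro p q hlt
      have hne2 : cmp p ≠ cmp q := (ne_of_lt hlt).symm
      have hWpq := hWcross hne2 (hcmp2 p) (hcmp2 q)
      have hpq : (p : Fin n) ≠ (q : Fin n) := fun hh =>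
        hne2 (huniq (hcmp2 p) (hh ▸ hcmp2 q))
      simp only [hD, Matrix.of_apply, if_neg hpq, hWpq]
      ring
    have hdetD : D.det = ∏ k ∈ m, (DB k).det := by
      rw [hBT.det]
      have himg : Finset.image cmp Finset.univ = m := by
        ext a
        simp only [Finset.mem_image, hm, Finset.mem_filter, Finset.mem_univ, true_and]
        constructor
        · rintro ⟨p, -, rfl⟩
          exact ⟨p.1, Finset.mem_inter.mpr ⟨p.2, hcmp2 p⟩⟩
        · rintro ⟨u, hu⟩
          exact ⟨⟨u, (Finset.mem_inter.mp hu).1⟩,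
            huniq (hcmp2 _) (Finset.mem_inter.mp hu).2⟩
      rw [himg]
      refine Finset.prod_congr rfl fun k hk => ?_
      set f : {v // v ∈ σ ∩ τ k} → {p : {v // v ∈ σ} // cmp p = k} :=
        fun p => ⟨⟨p.1, (Finset.mem_inter.mp p.2).1⟩,
          huniq (hcmp2 _) (Finset.mem_inter.mp p.2).2⟩ with hf
      have hbij : Function.Bijective f := by
        constructor
        · intro p q hpq
          rw [hf] at hpq
          simp only [Subtype.mk.injEq] at hpq
          exact Subtype.ext hpq
        · rintro ⟨⟨u, hu⟩, hcm⟩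
          refine ⟨⟨u, Finset.mem_inter.mpr ⟨hu, ?_⟩⟩, ?_⟩
          · rw [← hcm]; exact hcmp2 ⟨u, hu⟩
          · rw [hf]
      rw [← Matrix.det_submatrix_equiv_self (Equiv.ofBijective f hbij) (D.toSquareBlock cmp k)]
      congr 1
    have hfinal : detIW W σ = (θ / t0) * ∏ k ∈ m, (detIW W (σ ∩ τ k) * (t0 / θB k)) := by
      rw [htop, hdetD, mul_comm]
      congr 1
      refine Finset.prod_congr rfl fun k hk => ?_
      rw [hblock k hk]
      have hθBne : θB k ≠ 0 := ne_of_gt (hθBpos k hk)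
      field_simp
    rw [hfinal, real_sign_mul, real_sign_prod]
    have hsgn1 : Real.sign (θ / t0) = -1 := Real.sign_of_neg (div_neg_of_pos_of_neg hθ ht0neg)
    have hsgn2 : ∀ k ∈ m, Real.sign (detIW W (σ ∩ τ k) * (t0 / θB k))
        = Real.sign (detIW W (σ ∩ τ k)) * (-1) := by
      intro k hk
      rw [real_sign_mul, Real.sign_of_neg (div_neg_of_neg_of_pos ht0neg (hθBpos k hk))]
    rw [hsgn1, Finset.prod_congr rfl hsgn2, Finset.prod_mul_distrib, Finset.prod_const]
    have hcard : 1 ≤ m.card := Finset.card_pos.mpr hmne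
    obtain ⟨c', hc'⟩ : ∃ c', m.card = c' + 1 := ⟨m.card - 1, by omega⟩
    rw [hc']
    simp only [Nat.add_sub_cancel]
    rw [pow_succ]
    ring
  exact ⟨⟨hfwd, hbwd⟩, hdet⟩
end

section
/- Clique unions. Let G be a simple directed graph on [n] with CTLN parameters in the legal range, such that G is the clique union of components G_1,…,G_N on vertex sets τ_1,…,τ_N (i.e. [n] = τ_1 ∪ … ∪ τ_N with the τ_i pairwise disjoint, and for all i ≠ j, every node of τ_i sends an edge in G to every node of τ_j). Then for any σ ⊆ [n], writing σ_i := σ ∩ τ_i: σ ∈ FP(G) if and only if σ_i ∈ FP(G_i) for every i ∈ [N]. Moreover, if σ ∈ FP(G) then sgn det(I − W_σ) = Π_{i=1}^N sgn det(I − W_{σ_i}). -/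
open Matrix Finset

namespace CliqueAux

lemma max_zero_mul {c t : ℝ} (hc : 0 ≤ c) : max 0 (c * t) = c * max 0 t := by
  rcases le_total t 0 with h | h
  · rw [max_eq_left (mul_nonpos_of_nonneg_of_nonpos hc h), max_eq_left h, mul_zero]
  · rw [max_eq_right (mul_nonneg hc h), max_eq_right h]

lemma sign_cmul {a c : ℝ} (hc : 0 < c) : Real.sign (c * a) = Real.sign a := by
  rcases lt_trichotomy a 0 with h | rfl | h
  · rw [Real.sign_of_neg h, Real.sign_of_neg (mul_neg_of_pos_of_neg hc h)]
  · simp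
  · rw [Real.sign_of_pos h, Real.sign_of_pos (mul_pos hc h)]

lemma sign_mul (a b : ℝ) : Real.sign (a * b) = Real.sign a * Real.sign b := by
  rcases lt_trichotomy a 0 with ha | rfl | ha
  · rcases lt_trichotomy b 0 with hb | rfl | hb
    · rw [Real.sign_of_pos (mul_pos_of_neg_of_neg ha hb), Real.sign_of_neg ha,
        Real.sign_of_neg hb]; norm_num
    · simp
    · rw [Real.sign_of_neg (mul_neg_of_neg_of_pos ha hb), Real.sign_of_neg ha,
        Real.sign_of_pos hb]; norm_num
  · simp
  · rcases lt_trichotomy b 0 with hb | rfl | hb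
    · rw [Real.sign_of_neg (mul_neg_of_pos_of_neg ha hb), Real.sign_of_pos ha,
        Real.sign_of_neg hb]; norm_num
    · simp
    · rw [Real.sign_of_pos (mul_pos ha hb), Real.sign_of_pos ha, Real.sign_of_pos hb]; norm_num

lemma sign_prod {ι : Type*} (s : Finset ι) (f : ι → ℝ) :
    Real.sign (∏ i ∈ s, f i) = ∏ i ∈ s, Real.sign (f i) := by
  classical
  induction s using Finset.induction_on with
  | empty => simp
  | insert _ _ h ih => rw [Finset.prod_insert h, Finset.prod_insert h, sign_mul, ih]

/-- Rank-one update determinant identity for matrices with constant "row sums against `y`". -/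
lemma det_rank_one {m : Type*} [Fintype m] [DecidableEq m] (i₀ : m)
    (B : Matrix m m ℝ) (y : m → ℝ) (c D : ℝ) (hy : y i₀ ≠ 0)
    (hθ' : D + c * ∑ j, y j ≠ 0)
    (hBy : ∀ i, ∑ j, B i j * y j = D) :
    D * (Matrix.of fun i j => B i j + c).det = (D + c * ∑ j, y j) * B.det := by
  classical
  set A : Matrix m m ℝ := Matrix.of fun i j => B i j + c with hA
  set θ' : ℝ := D + c * ∑ j, y j with hθdef
  have hAy : ∀ i, ∑ j, A i j * y j = θ' := by
    intro i
    have h1 : ∀ j : m, A i j * y j = B i j * y j + c * y j := by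
      intro j; simp [hA]; ring
    rw [Finset.sum_congr rfl fun j _ => h1 j, Finset.sum_add_distrib, hBy i, ← Finset.mul_sum]
  -- step 1 : column replacement by linear combinations
  have hB1 : (B.updateCol i₀ (fun _ => D)).det = y i₀ * B.det := by
    have := Matrix.det_updateCol_sum B i₀ y
    have hcol : (fun k => ∑ i, y i • B k i) = fun _ => D := by
      funext k
      simpa [smul_eq_mul, mul_comm] using hBy k
    rw [hcol] at this
    simpa using this
  have hA1 : (A.updateCol i₀ (fun _ => θ')).det = y i₀ * A.det := by
    have := Matrix.det_updateCol_sum A i₀ y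
    have hcol : (fun k => ∑ i, y i • A k i) = fun _ => θ' := by
      funext k
      simpa [smul_eq_mul, mul_comm] using hAy k
    rw [hcol] at this
    simpa using this
  -- step 2 : scale out the constant columns
  have hB2 : (B.updateCol i₀ (fun _ => D)).det = D * (B.updateCol i₀ (fun _ => (1:ℝ))).det := by
    have h0 : (fun _ : m => D) = D • (fun _ : m => (1:ℝ)) := by funext j; simp
    rw [h0, Matrix.det_updateCol_smul]
  have hA2 : (B.updateCol i₀ (fun _ => θ')).det
      = θ' * (B.updateCol i₀ (fun _ => (1:ℝ))).det := by
    have h0 : (fun _ : m => θ') = θ' • (fun _ : m => (1:ℝ)) := by funext j; simp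
    rw [h0, Matrix.det_updateCol_smul]
  -- step 3 : elementary column operations relating A and B
  have hE : (A.updateCol i₀ fun _ => θ')
      = (B.updateCol i₀ fun _ => θ') *
        (1 + Matrix.replicateCol Unit (Pi.single i₀ (1:ℝ)) *
          Matrix.replicateRow Unit (fun j => if j = i₀ then 0 else c / θ')) := by
    ext i j
    rw [Matrix.mul_add, Matrix.mul_one]
    have hcr : ((B.updateCol i₀ fun _ => θ') *
        (Matrix.replicateCol Unit (Pi.single i₀ (1:ℝ)) *
          Matrix.replicateRow Unit (fun j => if j = i₀ then 0 else c / θ'))) i j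
        = θ' * (if j = i₀ then 0 else c / θ') := by
      rw [← Matrix.mul_assoc]
      simp [Matrix.mul_apply, Matrix.replicateCol, Matrix.replicateRow, Pi.single_apply, mul_comm]
    rw [Matrix.add_apply, hcr]
    by_cases hj : j = i₀
    · subst hj; simp [Matrix.updateCol_apply]
    · simp only [Matrix.updateCol_apply, hj, if_false]
      rw [mul_div_cancel₀ _ hθ']
      simp [hA]
  have hdetE : (1 + Matrix.replicateCol Unit (Pi.single i₀ (1:ℝ)) *
          Matrix.replicateRow Unit (fun j => if j = i₀ then 0 else c / θ')).det = 1 := by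
    rw [Matrix.det_one_add_replicateCol_mul_replicateRow]
    simp [dotProduct, Pi.single_apply]
  have key : y i₀ * A.det = θ' * (B.updateCol i₀ (fun _ => (1:ℝ))).det := by
    rw [← hA1, hE, Matrix.det_mul, hdetE, mul_one, hA2]
  have key2 : y i₀ * B.det * D = D * ((B.updateCol i₀ (fun _ => (1:ℝ))).det * D) := by
    rw [← hB1, hB2]; ring
  have : y i₀ * (D * A.det) = y i₀ * (θ' * B.det) := by
    calc y i₀ * (D * A.det) = D * (y i₀ * A.det) := by ring
    _ = D * (θ' * (B.updateCol i₀ (fun _ => (1:ℝ))).det) := by rw [key]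
    _ = θ' * (D * (B.updateCol i₀ (fun _ => (1:ℝ))).det) := by ring
    _ = θ' * (y i₀ * B.det) := by rw [← hB2, hB1]
    _ = y i₀ * (θ' * B.det) := by ring
  exact mul_left_cancel₀ hy this

end CliqueAux


/-- **Clique unions.** Let `G` be a simple directed graph on `[n]` with CTLN parameters in
the legal range, which is the clique union of components `G_1, …, G_N` on vertex sets
`τ_1, …, τ_N` (all edges between distinct components are present). Then for any
`σ ⊆ [n]`, with `σ_i := σ ∩ τ_i`: `σ ∈ FP(G)` iff `σ_i ∈ FP(G_i)` for every `i`.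
Moreover, if `σ ∈ FP(G)` then `sgn det(I − W_σ) = ∏_i sgn det(I − W_{σ_i})`. -/
theorem clique_union_rule {n N : ℕ} (G : Fin n → Fin n → Prop) [DecidableRel G]
    (hGirr : ∀ i, ¬ G i i) (ε δ θ : ℝ)
    (hθ : 0 < θ) (hδ : 0 < δ) (hε : 0 < ε) (hεδ : ε < δ / (δ + 1))
    (W : Matrix (Fin n) (Fin n) ℝ) (hWdef : W = ctlnW G ε δ)
    (b : Fin n → ℝ) (hbdef : b = fun _ => θ)
    (τ : Fin N → Finset (Fin n)) (hne : ∀ i, (τ i).Nonempty)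
    (hdisj : ∀ i j, i ≠ j → Disjoint (τ i) (τ j))
    (hcover : Finset.univ.biUnion τ = Finset.univ)
    (halledges : ∀ i j : Fin N, i ≠ j → ∀ u ∈ τ i, ∀ v ∈ τ j, G u v)
    (σ : Finset (Fin n)) :
    (memFP W b Finset.univ σ ↔ ∀ i : Fin N, memFP W b (τ i) (σ ∩ τ i)) ∧
    (memFP W b Finset.univ σ →
      Real.sign (detIW W σ) = ∏ i : Fin N, Real.sign (detIW W (σ ∩ τ i))) := by
  classical
  -- ## basic parameter facts
  have hε1 : ε < 1 := by
    have h1 : δ / (δ + 1) < 1 := by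
      rw [div_lt_one (by linarith)]; linarith
    linarith
  -- ## entries of W
  have hW0 : ∀ i, W i i = 0 := by intro i; simp [hWdef, ctlnW]
  have hWub : ∀ i j, i ≠ j → W i j ≤ -1 + ε := by
    intro i j hij
    by_cases h : G j i
    · simp [hWdef, ctlnW, hij, h]
    · simp only [hWdef, ctlnW, Matrix.of_apply, if_neg hij, if_neg h]
      linarith
  have hWle0 : ∀ i j, W i j ≤ 0 := by
    intro i j
    by_cases hij : i = j
    · subst hij; rw [hW0]
    · exact le_trans (hWub i j hij) (by linarith)
  -- ## the component function κ
  have hex : ∀ j : Fin n, ∃ k, j ∈ τ k := by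
    intro j
    have hj : j ∈ Finset.univ.biUnion τ := by rw [hcover]; exact Finset.mem_univ j
    rcases Finset.mem_biUnion.mp hj with ⟨k, -, hk⟩
    exact ⟨k, hk⟩
  choose κ hκ using hex
  have hκu : ∀ (j : Fin n) (k : Fin N), j ∈ τ k → κ j = k := by
    intro j k hk
    by_contra hne'
    exact (Finset.disjoint_left.mp (hdisj _ _ hne') (hκ j)) hk
  have hWcross : ∀ (k : Fin N) (i j : Fin n), i ∈ τ k → j ∉ τ k → W i j = -1 + ε := by
    intro k i j hi hj
    have hij : i ≠ j := fun h => hj (h ▸ hi)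
    have hkj : κ j ≠ k := fun h => hj (h ▸ hκ j)
    have hedge : G j i := halledges (κ j) k hkj j (hκ j) i hi
    simp [hWdef, ctlnW, hij, hedge]
  -- ## partitioning sums over σ
  have hσsplit : σ = Finset.univ.biUnion (fun k => σ ∩ τ k) := by
    ext j
    simp only [Finset.mem_biUnion, Finset.mem_inter, Finset.mem_univ, true_and]
    exact ⟨fun h => ⟨κ j, h, hκ j⟩, fun ⟨k, h, _⟩ => h⟩
  have hsum_split : ∀ (f : Fin n → ℝ),
      ∑ j ∈ σ, f j = ∑ k : Fin N, ∑ j ∈ σ ∩ τ k, f j := by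
    intro f
    have hd : (↑(Finset.univ : Finset (Fin N)) : Set (Fin N)).PairwiseDisjoint
        (fun k => σ ∩ τ k) := by
      intro a _ b _ hab
      exact (hdisj a b hab).mono Finset.inter_subset_right Finset.inter_subset_right
    conv_lhs => rw [hσsplit]
    exact Finset.sum_biUnion hd
  -- ## memFP intro and elim helpers
  have hmemFP_intro : ∀ (τ' σ' : Finset (Fin n)) (x : Fin n → ℝ),
      (∀ i ∈ τ', x i = max 0 (∑ j ∈ τ', W i j * x j + θ)) → (∀ i ∉ τ', x i = 0) →
      (∀ i, 0 < x i ↔ i ∈ σ') → memFP W b τ' σ' := by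
    intro τ' σ' x h1 h2 h3
    refine ⟨x, ⟨?_, h2⟩, h3⟩
    simp only [hbdef]
    exact h1
  have hmemFP_elim : ∀ (τ' σ' : Finset (Fin n)), memFP W b τ' σ' →
      ∃ x : Fin n → ℝ, (∀ i ∈ τ', x i = max 0 (∑ j ∈ τ', W i j * x j + θ)) ∧
        (∀ i ∉ τ', x i = 0) ∧ (∀ i, 0 < x i ↔ i ∈ σ') := by
    intro τ' σ' hm
    obtain ⟨x, ⟨h1, h2⟩, h3⟩ := hm
    refine ⟨x, ?_, h2, h3⟩
    intro i hi
    have := h1 i hi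
    simp only [hbdef] at this
    exact this
  -- ## extracting standard data from a fixed point
  have hFPdata : ∀ (τ' σ' : Finset (Fin n)) (x : Fin n → ℝ),
      (∀ i ∈ τ', x i = max 0 (∑ j ∈ τ', W i j * x j + θ)) → (∀ i ∉ τ', x i = 0) →
      (∀ i, 0 < x i ↔ i ∈ σ') →
      (∀ i, 0 ≤ x i) ∧ (∀ i, i ∉ σ' → x i = 0) ∧ σ' ⊆ τ' ∧
      (∀ i ∈ σ', x i = ∑ j ∈ σ', W i j * x j + θ) ∧
      (∀ i ∈ τ', i ∉ σ' → ∑ j ∈ σ', W i j * x j + θ ≤ 0) := by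
    intro τ' σ' x hfix hout hsupp
    have hxnn : ∀ i, 0 ≤ x i := by
      intro i
      by_cases hi : i ∈ τ'
      · rw [hfix i hi]; exact le_max_left _ _
      · rw [hout i hi]
    have hx0 : ∀ i, i ∉ σ' → x i = 0 := by
      intro i hi
      have h1 : ¬ 0 < x i := fun h => hi ((hsupp i).mp h)
      linarith [hxnn i, not_lt.mp h1]
    have hss : σ' ⊆ τ' := by
      intro i hi
      by_contra h
      have h1 := hout i h
      have h2 := (hsupp i).mpr hi
      linarith
    have hsum : ∀ i, ∑ j ∈ τ', W i j * x j = ∑ j ∈ σ', W i j * x j := by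
      intro i
      refine (Finset.sum_subset hss ?_).symm
      intro j _ hj
      rw [hx0 j hj, mul_zero]
    refine ⟨hxnn, hx0, hss, ?_, ?_⟩
    · intro i hi
      have hpos : 0 < x i := (hsupp i).mpr hi
      have h := hfix i (hss hi)
      rw [hsum i] at h
      rcases le_or_gt (∑ j ∈ σ', W i j * x j + θ) 0 with hle | hlt
      · rw [max_eq_left hle] at h; linarith
      · rw [max_eq_right hlt.le] at h; exact h
    · intro i hi hni
      have h := hfix i hi
      rw [hsum i, hx0 i hni] at h
      by_contra hc
      push_neg at hc
      rw [max_eq_right hc.le] at h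
      linarith
  -- ## the fundamental lower bound on θ
  have hlower : ∀ (σ' : Finset (Fin n)) (x : Fin n → ℝ),
      (∀ i, 0 ≤ x i) →
      (∀ i ∈ σ', x i = ∑ j ∈ σ', W i j * x j + θ) →
      ∀ ℓ ∈ σ', (1 - ε) * (∑ j ∈ σ', x j) + ε * x ℓ ≤ θ := by
    intro σ' x hxnn hxeq ℓ hℓ
    have herase : ∑ j ∈ σ'.erase ℓ, x j = (∑ j ∈ σ', x j) - x ℓ := by
      have := Finset.add_sum_erase σ' x hℓ
      linarith
    have h1 : ∑ j ∈ σ', W ℓ j * x j ≤ (-1 + ε) * ((∑ j ∈ σ', x j) - x ℓ) := by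
      rw [← Finset.add_sum_erase σ' (fun j => W ℓ j * x j) hℓ, hW0 ℓ, zero_mul, zero_add,
        ← herase, Finset.mul_sum]
      refine Finset.sum_le_sum fun j hj => ?_
      have hjℓ : ℓ ≠ j := (Finset.ne_of_mem_erase hj).symm
      exact mul_le_mul_of_nonneg_right (hWub ℓ j hjℓ) (hxnn j)
    have h2 := hxeq ℓ hℓ
    linarith
  -- ## generic row-splitting along components
  have hrow : ∀ (x : Fin n → ℝ) (k : Fin N), ∀ i ∈ τ k,
      ∑ j ∈ σ, W i j * x j = (∑ j ∈ σ ∩ τ k, W i j * x j)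
        + (-1 + ε) * ((∑ j ∈ σ, x j) - ∑ j ∈ σ ∩ τ k, x j) := by
    intro x k i hi
    have hsub : σ ∩ τ k ⊆ σ := Finset.inter_subset_left
    have he : σ \ (σ ∩ τ k) = σ \ τ k := by
      ext j; simp only [Finset.mem_sdiff, Finset.mem_inter]; tauto
    have hsd1 := Finset.sum_sdiff hsub (f := fun j => W i j * x j)
    have hsd2 := Finset.sum_sdiff hsub (f := x)
    rw [he] at hsd1 hsd2
    have hcr : ∑ j ∈ σ \ τ k, W i j * x j = (-1 + ε) * ∑ j ∈ σ \ τ k, x j := by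
      rw [Finset.mul_sum]
      refine Finset.sum_congr rfl fun j hj => ?_
      rw [hWcross k i j hi (Finset.mem_sdiff.mp hj).2]
    have hxs : ∑ j ∈ σ \ τ k, x j = (∑ j ∈ σ, x j) - ∑ j ∈ σ ∩ τ k, x j := by linarith
    rw [← hsd1, hcr, hxs]
    ring
  -- ## the backward direction
  have hbackward : (∀ k, memFP W b (τ k) (σ ∩ τ k)) → memFP W b Finset.univ σ := by
    intro hyp
    have hyp' := fun k => hmemFP_elim _ _ (hyp k)
    choose y hyfix hyout hysupp using hyp'
    have hdata := fun k => hFPdata (τ k) (σ ∩ τ k) (y k) (hyfix k) (hyout k) (hysupp k)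
    have hynn : ∀ k i, 0 ≤ y k i := fun k => (hdata k).1
    have hy0 : ∀ k i, i ∉ σ ∩ τ k → y k i = 0 := fun k => (hdata k).2.1
    have hyeq : ∀ k, ∀ i ∈ σ ∩ τ k, y k i = ∑ j ∈ σ ∩ τ k, W i j * y k j + θ :=
      fun k => (hdata k).2.2.2.1
    have hyle : ∀ k, ∀ i ∈ τ k, i ∉ σ ∩ τ k → ∑ j ∈ σ ∩ τ k, W i j * y k j + θ ≤ 0 :=
      fun k => (hdata k).2.2.2.2
    -- every component meets σ
    have hσknon : ∀ k, (σ ∩ τ k).Nonempty := by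
      intro k
      rcases (σ ∩ τ k).eq_empty_or_nonempty with he | h
      · exfalso
        obtain ⟨i₀, hi₀⟩ := hne k
        have h1 := hyle k i₀ hi₀ (by rw [he]; exact Finset.notMem_empty i₀)
        rw [he] at h1
        simp at h1
        linarith
      · exact h
    obtain ⟨T, hTdef⟩ : ∃ T : Fin N → ℝ, ∀ k, T k = ∑ j ∈ σ ∩ τ k, y k j := ⟨_, fun _ => rfl⟩
    have hTpos : ∀ k, 0 < T k := by
      intro k
      rw [hTdef]
      exact Finset.sum_pos (fun j hj => (hysupp k j).mpr hj) (hσknon k)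
    obtain ⟨D, hDdef⟩ : ∃ D : Fin N → ℝ, ∀ k, D k = θ - (1 - ε) * T k := ⟨_, fun _ => rfl⟩
    have hDpos : ∀ k, 0 < D k := by
      intro k
      obtain ⟨a, ha⟩ := hσknon k
      have hl := hlower (σ ∩ τ k) (y k) (hynn k) (hyeq k) a ha
      have hya : 0 < y k a := (hysupp k a).mpr ha
      rw [hDdef, hTdef]
      nlinarith [mul_pos hε hya]
    obtain ⟨Sg, hSgdef⟩ : ∃ z : ℝ, z = ∑ m : Fin N, T m / D m := ⟨_, rfl⟩
    have hSgnn : 0 ≤ Sg := by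
      rw [hSgdef]
      exact Finset.sum_nonneg fun m _ => div_nonneg (hTpos m).le (hDpos m).le
    have hden : 0 < 1 + (1 - ε) * Sg := by nlinarith
    obtain ⟨u, hudef⟩ : ∃ z : ℝ, z = θ / (1 + (1 - ε) * Sg) := ⟨_, rfl⟩
    have hupos : 0 < u := by rw [hudef]; exact div_pos hθ hden
    obtain ⟨c, hcdef⟩ : ∃ c : Fin N → ℝ, ∀ k, c k = u / D k := ⟨_, fun _ => rfl⟩
    have hcpos : ∀ k, 0 < c k := by
      intro k; rw [hcdef]; exact div_pos hupos (hDpos k)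
    have hcD : ∀ k, c k * D k = u := by
      intro k; rw [hcdef]; exact div_mul_cancel₀ u (hDpos k).ne'
    have hcθ : ∀ k, c k * θ = u + (1 - ε) * (c k * T k) := by
      intro k
      have h1 : c k * θ = c k * D k + (1 - ε) * (c k * T k) := by rw [hDdef]; ring
      rw [h1, hcD]
    obtain ⟨x, hxdef⟩ : ∃ x : Fin n → ℝ, ∀ j, x j = c (κ j) * y (κ j) j := ⟨_, fun _ => rfl⟩
    have hSk : ∀ k, ∑ j ∈ σ ∩ τ k, x j = c k * T k := by
      intro k
      rw [hTdef, Finset.mul_sum]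
      refine Finset.sum_congr rfl fun j hj => ?_
      rw [hxdef j, hκu j k (Finset.mem_inter.mp hj).2]
    have hS : ∑ j ∈ σ, x j = u * Sg := by
      rw [hsum_split x, hSgdef, Finset.mul_sum]
      refine Finset.sum_congr rfl fun k _ => ?_
      rw [hSk k, hcdef k]
      field_simp
    have hθu : u * (1 + (1 - ε) * Sg) = θ := by
      rw [hudef]; field_simp
    have huS : θ - (1 - ε) * ∑ j ∈ σ, x j = u := by
      rw [hS]; nlinarith [hθu]
    have hx0 : ∀ j, j ∉ σ → x j = 0 := by
      intro j hj
      rw [hxdef j, hy0 (κ j) j (fun h => hj (Finset.mem_inter.mp h).1), mul_zero]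
    have hxsupp : ∀ j, 0 < x j ↔ j ∈ σ := by
      intro j
      constructor
      · intro h
        by_contra hj
        rw [hx0 j hj] at h
        exact lt_irrefl 0 h
      · intro hj
        rw [hxdef j]
        exact mul_pos (hcpos _) ((hysupp (κ j) j).mpr (Finset.mem_inter.mpr ⟨hj, hκ j⟩))
    refine hmemFP_intro _ _ x ?_ (fun i hi => absurd (Finset.mem_univ i) hi) hxsupp
    intro i _
    have hik : i ∈ τ (κ i) := hκ i
    have c1 : ∑ j ∈ Finset.univ, W i j * x j = ∑ j ∈ σ, W i j * x j :=
      (Finset.sum_subset (Finset.subset_univ σ) fun j _ hj => by rw [hx0 j hj, mul_zero]).symm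
    have c3 : ∑ j ∈ σ ∩ τ (κ i), W i j * x j
        = c (κ i) * ∑ j ∈ σ ∩ τ (κ i), W i j * y (κ i) j := by
      rw [Finset.mul_sum]
      refine Finset.sum_congr rfl fun j hj => ?_
      rw [hxdef j, hκu j (κ i) (Finset.mem_inter.mp hj).2]
      ring
    have c4 : ∑ j ∈ σ ∩ τ (κ i), W i j * y (κ i) j = ∑ j ∈ τ (κ i), W i j * y (κ i) j :=
      Finset.sum_subset Finset.inter_subset_right
        (fun j _ hnj => by rw [hy0 (κ i) j hnj, mul_zero])
    have key : ∑ j ∈ Finset.univ, W i j * x j + θ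
        = c (κ i) * ((∑ j ∈ τ (κ i), W i j * y (κ i) j) + θ) := by
      rw [c1, hrow x (κ i) i hik, c3, c4, hSk (κ i), mul_add]
      linarith [hcθ (κ i), huS]
    rw [key, CliqueAux.max_zero_mul (hcpos (κ i)).le, ← hyfix (κ i) i hik]
    exact hxdef i
  -- ## the forward direction together with the determinant formula
  have hmain : memFP W b Finset.univ σ →
      (∀ k, memFP W b (τ k) (σ ∩ τ k)) ∧
      Real.sign (detIW W σ) = ∏ k : Fin N, Real.sign (detIW W (σ ∩ τ k)) := by
    intro hm
    obtain ⟨x, hfix, hout, hsupp⟩ := hmemFP_elim _ _ hm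
    obtain ⟨hxnn, hx0, -, hxeq, hxle⟩ := hFPdata _ _ _ hfix hout hsupp
    -- each component meets σ
    have hσk : ∀ k, (σ ∩ τ k).Nonempty := by
      intro k
      rcases (σ ∩ τ k).eq_empty_or_nonempty with he | h
      · exfalso
        obtain ⟨i₀, hi₀⟩ := hne k
        have hi₀σ : i₀ ∉ σ := fun h =>
          (Finset.eq_empty_iff_forall_notMem.mp he i₀) (Finset.mem_inter.mpr ⟨h, hi₀⟩)
        rcases σ.eq_empty_or_nonempty with hσe | ⟨ℓ, hℓ⟩
        · have h1 := hxle i₀ (Finset.mem_univ i₀) hi₀σ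
          rw [hσe] at h1
          simp at h1
          linarith
        · have hcr : ∀ j ∈ σ, W i₀ j = -1 + ε := by
            intro j hj
            refine hWcross k i₀ j hi₀ ?_
            intro hjk
            exact (Finset.eq_empty_iff_forall_notMem.mp he j) (Finset.mem_inter.mpr ⟨hj, hjk⟩)
          have h1 := hxle i₀ (Finset.mem_univ i₀) hi₀σ
          have h2 : ∑ j ∈ σ, W i₀ j * x j = (-1 + ε) * ∑ j ∈ σ, x j := by
            rw [Finset.mul_sum]
            exact Finset.sum_congr rfl fun j hj => by rw [hcr j hj]
          have h3 := hlower σ x hxnn hxeq ℓ hℓ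
          have hxℓ : 0 < x ℓ := (hsupp ℓ).mpr hℓ
          rw [h2] at h1
          nlinarith [mul_pos hε hxℓ]
      · exact h
    obtain ⟨Sk, hSkdef⟩ : ∃ f : Fin N → ℝ, ∀ k, f k = ∑ j ∈ σ ∩ τ k, x j := ⟨_, fun _ => rfl⟩
    obtain ⟨θk, hθkdef⟩ : ∃ f : Fin N → ℝ,
        ∀ k, f k = θ - (1 - ε) * ((∑ j ∈ σ, x j) - Sk k) := ⟨_, fun _ => rfl⟩
    have hθkeq : ∀ k, ∀ i ∈ σ ∩ τ k, x i = (∑ j ∈ σ ∩ τ k, W i j * x j) + θk k := by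
      intro k i hi
      obtain ⟨hiσ, hiτ⟩ := Finset.mem_inter.mp hi
      have h1 := hxeq i hiσ
      rw [hrow x k i hiτ] at h1
      rw [h1, hθkdef, hSkdef]
      ring
    have hθkpos : ∀ k, 0 < θk k := by
      intro k
      obtain ⟨i, hi⟩ := hσk k
      have h := hθkeq k i hi
      have hxi : 0 < x i := (hsupp i).mpr (Finset.mem_inter.mp hi).1
      have hsum : ∑ j ∈ σ ∩ τ k, W i j * x j ≤ 0 :=
        Finset.sum_nonpos fun j _ => mul_nonpos_of_nonpos_of_nonneg (hWle0 i j) (hxnn j)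
      linarith
    have hθkle : ∀ k, ∀ i ∈ τ k, i ∉ σ → (∑ j ∈ σ ∩ τ k, W i j * x j) + θk k ≤ 0 := by
      intro k i hi hni
      have h1 := hxle i (Finset.mem_univ i) hni
      rw [hrow x k i hi] at h1
      rw [hθkdef, hSkdef]
      linarith
    have hforward : ∀ k, memFP W b (τ k) (σ ∩ τ k) := by
      intro k
      have hc : 0 < θ / θk k := div_pos hθ (hθkpos k)
      refine hmemFP_intro _ _ (fun j => if j ∈ τ k then (θ / θk k) * x j else 0) ?_ ?_ ?_
      · intro i hi
        simp only [hi, if_true]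
        have hsum : ∑ j ∈ τ k, W i j * (if j ∈ τ k then (θ / θk k) * x j else 0)
            = (θ / θk k) * ∑ j ∈ σ ∩ τ k, W i j * x j := by
          rw [Finset.mul_sum, ← Finset.sum_subset (Finset.inter_subset_right (s₁ := σ))]
          · refine Finset.sum_congr rfl fun j hj => ?_
            rw [if_pos (Finset.mem_inter.mp hj).2]
            ring
          · intro j hj hnj
            rw [if_pos hj, hx0 j (fun hjσ => hnj (Finset.mem_inter.mpr ⟨hjσ, hj⟩)), mul_zero,
              mul_zero]
        rw [hsum]
        by_cases hiσ : i ∈ σ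
        · have h1 := hθkeq k i (Finset.mem_inter.mpr ⟨hiσ, hi⟩)
          have h2 : (θ / θk k) * (∑ j ∈ σ ∩ τ k, W i j * x j) + θ = (θ / θk k) * x i := by
            rw [h1, mul_add, div_mul_cancel₀ _ (hθkpos k).ne']
          rw [h2, max_eq_right (mul_nonneg hc.le (hxnn i))]
        · have h1 := hθkle k i hi hiσ
          have h2 : (θ / θk k) * (∑ j ∈ σ ∩ τ k, W i j * x j) + θ ≤ 0 := by
            have h3 : (θ / θk k) * ((∑ j ∈ σ ∩ τ k, W i j * x j) + θk k) ≤ 0 :=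
              mul_nonpos_of_nonneg_of_nonpos hc.le h1
            rw [mul_add, div_mul_cancel₀ _ (hθkpos k).ne'] at h3
            exact h3
          rw [max_eq_left h2, hx0 i hiσ, mul_zero]
      · intro i hi
        simp only [if_neg hi]
      · intro i
        by_cases hi : i ∈ τ k
        · simp only [hi, if_true]
          constructor
          · intro h
            have hxi : 0 < x i := by nlinarith [hxnn i]
            exact Finset.mem_inter.mpr ⟨(hsupp i).mp hxi, hi⟩
          · intro h
            exact mul_pos hc ((hsupp i).mpr (Finset.mem_inter.mp h).1)
        · simp only [hi, if_false]
          constructor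
          · intro h
            exact absurd rfl (ne_of_lt h)
          · intro h
            exact absurd (Finset.mem_inter.mp h).2 hi
    refine ⟨hforward, ?_⟩
    -- ## the determinant part
    rcases σ.eq_empty_or_nonempty with rfl | hσne
    · haveI hNempty : IsEmpty (Fin N) := ⟨fun k => by
        obtain ⟨j, hj⟩ := hσk k
        simp at hj⟩
      haveI : IsEmpty {v : Fin n // v ∈ (∅ : Finset (Fin n))} :=
        ⟨fun v => absurd v.2 (Finset.notMem_empty v.1)⟩
      rw [Finset.univ_eq_empty, Finset.prod_empty]
      have h1 : detIW W ∅ = 1 := Matrix.det_isEmpty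
      rw [h1, Real.sign_one]
    · obtain ⟨ℓ, hℓ⟩ := hσne
      have hxℓ : 0 < x ℓ := (hsupp ℓ).mpr hℓ
      obtain ⟨u, hu⟩ : ∃ z : ℝ, z = θ - (1 - ε) * ∑ j ∈ σ, x j := ⟨_, rfl⟩
      have hupos : 0 < u := by
        have h3 := hlower σ x hxnn hxeq ℓ hℓ
        rw [hu]
        nlinarith [mul_pos hε hxℓ]
      -- the common per-block row computation
      have hcommon : ∀ (k : Fin N), ∀ a ∈ σ ∩ τ k,
          ∑ j ∈ σ ∩ τ k, (((if a = j then (1:ℝ) else 0) - W a j) - (1 - ε)) * x j = u := by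
        intro k a ha
        have e1 : ∑ j ∈ σ ∩ τ k, (((if a = j then (1:ℝ) else 0) - W a j) - (1 - ε)) * x j
            = (∑ j ∈ σ ∩ τ k, (if a = j then x j else 0))
              - (∑ j ∈ σ ∩ τ k, W a j * x j) - (1 - ε) * ∑ j ∈ σ ∩ τ k, x j := by
          rw [Finset.mul_sum, ← Finset.sum_sub_distrib, ← Finset.sum_sub_distrib]
          refine Finset.sum_congr rfl fun j _ => ?_
          by_cases h : a = j
          · rw [if_pos h, if_pos h]; ring
          · rw [if_neg h, if_neg h]; ring
        have e2 : ∑ j ∈ σ ∩ τ k, (if a = j then x j else 0) = x a := by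
          rw [Finset.sum_ite_eq (σ ∩ τ k) a x, if_pos ha]
        have e3 := hθkeq k a ha
        rw [e1, e2, ← hSkdef k, hu]
        linarith [hθkdef k]
      -- the big matrices
      obtain ⟨M, hMdef⟩ : ∃ M : Matrix {v : Fin n // v ∈ σ} {v : Fin n // v ∈ σ} ℝ,
          M = (1 : Matrix {v : Fin n // v ∈ σ} {v : Fin n // v ∈ σ} ℝ)
            - W.submatrix Subtype.val Subtype.val := ⟨_, rfl⟩
      have hdetIW : detIW W σ = M.det := by rw [hMdef]; rfl
      obtain ⟨Bm, hBmdef⟩ : ∃ Bm : Matrix {v : Fin n // v ∈ σ} {v : Fin n // v ∈ σ} ℝ,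
          Bm = Matrix.of (fun i j : {v : Fin n // v ∈ σ} =>
            if κ i.1 = κ j.1 then ((if i.1 = j.1 then (1:ℝ) else 0) - W i.1 j.1) - (1 - ε)
            else 0) := ⟨_, rfl⟩
      have hMB : M = Matrix.of fun i j => Bm i j + (1 - ε) := by
        rw [hMdef, hBmdef]
        ext i j
        simp only [Matrix.sub_apply, Matrix.of_apply, Matrix.submatrix_apply]
        by_cases h : κ i.1 = κ j.1
        · rw [if_pos h]
          by_cases hij : i = j
          · subst hij
            rw [Matrix.one_apply_eq, if_pos rfl]
            ring
          · rw [Matrix.one_apply_ne hij, if_neg (fun hv => hij (Subtype.ext hv))]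
            ring
        · rw [if_neg h]
          have hj : j.1 ∉ τ (κ i.1) := fun hm => h (hκu j.1 (κ i.1) hm).symm
          have hWij := hWcross (κ i.1) i.1 j.1 (hκ i.1) hj
          have hij : i.1 ≠ j.1 := fun hv => hj (hv ▸ hκ i.1)
          rw [Matrix.one_apply_ne (fun hv => hij (congrArg Subtype.val hv)), hWij]
          ring
      have hBmrow : ∀ i : {v : Fin n // v ∈ σ},
          ∑ j : {v : Fin n // v ∈ σ}, Bm i j * x j.1 = u := by
        intro i
        have h1 : ∑ j : {v : Fin n // v ∈ σ}, Bm i j * x j.1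
            = ∑ j ∈ σ, (if κ i.1 = κ j then ((if i.1 = j then (1:ℝ) else 0) - W i.1 j)
                - (1 - ε) else 0) * x j := by
          rw [hBmdef, Finset.univ_eq_attach]
          exact Finset.sum_attach σ (fun j => (if κ i.1 = κ j then
            ((if i.1 = j then (1:ℝ) else 0) - W i.1 j) - (1 - ε) else 0) * x j)
        have h2 : ∀ j ∈ σ, (if κ i.1 = κ j then ((if i.1 = j then (1:ℝ) else 0) - W i.1 j)
                - (1 - ε) else 0) * x j
            = if j ∈ τ (κ i.1) then (((if i.1 = j then (1:ℝ) else 0) - W i.1 j) - (1 - ε)) * x j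
              else 0 := by
          intro j hj
          by_cases h : j ∈ τ (κ i.1)
          · rw [if_pos h, if_pos (hκu j (κ i.1) h).symm]
          · rw [if_neg h, if_neg (fun he => h (by rw [he]; exact hκ j)), zero_mul]
        rw [h1, Finset.sum_congr rfl h2, Finset.sum_ite_mem]
        exact hcommon (κ i.1) i.1 (Finset.mem_inter.mpr ⟨i.2, hκ i.1⟩)
      have hxsum : ∑ j : {v : Fin n // v ∈ σ}, x j.1 = ∑ j ∈ σ, x j := by
        rw [Finset.univ_eq_attach]
        exact Finset.sum_attach σ x
      have hscal : u + (1 - ε) * ∑ j : {v : Fin n // v ∈ σ}, x j.1 = θ := by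
        rw [hxsum, hu]; ring
      have hdet1 := CliqueAux.det_rank_one (⟨ℓ, hℓ⟩ : {v : Fin n // v ∈ σ}) Bm
        (fun j => x j.1) (1 - ε) u hxℓ.ne' (by rw [hscal]; exact hθ.ne') hBmrow
      rw [hscal, ← hMB] at hdet1
      -- hdet1 : u * M.det = θ * Bm.det
      have hBT : Bm.BlockTriangular (fun i => κ i.1) := by
        intro i j hlt
        rw [hBmdef]
        exact if_neg (ne_of_gt hlt)
      have hdetBm : Bm.det = ∏ k : Fin N, (Bm.toSquareBlock (fun i => κ i.1) k).det :=
        hBT.det_fintype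
      -- per-block identification
      have hblock : ∀ k : Fin N,
          u * detIW W (σ ∩ τ k) = θk k * (Bm.toSquareBlock (fun i => κ i.1) k).det := by
        intro k
        obtain ⟨a, ha⟩ := hσk k
        have haσ : a ∈ σ := (Finset.mem_inter.mp ha).1
        obtain ⟨Bk, hBkdef⟩ : ∃ Bk : Matrix {v : Fin n // v ∈ σ ∩ τ k}
            {v : Fin n // v ∈ σ ∩ τ k} ℝ,
            Bk = Matrix.of (fun i j : {v : Fin n // v ∈ σ ∩ τ k} =>
              ((if i.1 = j.1 then (1:ℝ) else 0) - W i.1 j.1) - (1 - ε)) := ⟨_, rfl⟩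
        obtain ⟨e, he⟩ : ∃ e : {v : Fin n // v ∈ σ ∩ τ k} ≃ {i : {v : Fin n // v ∈ σ} // κ i.1 = k},
            ∀ p, (e.symm p).1 = p.1.1 :=
          ⟨{ toFun := fun v => ⟨⟨v.1, (Finset.mem_inter.mp v.2).1⟩,
              hκu v.1 k (Finset.mem_inter.mp v.2).2⟩
             invFun := fun p => ⟨p.1.1, Finset.mem_inter.mpr ⟨p.1.2, by
              have hp := hκ p.1.1
              rw [p.2] at hp
              exact hp⟩⟩
             left_inv := fun v => rfl
             right_inv := fun p => rfl }, fun p => rfl⟩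
        have hsq : (Bm.toSquareBlock (fun i => κ i.1) k) = Bk.submatrix e.symm e.symm := by
          ext p q
          rw [Matrix.toSquareBlock_def]
          simp only [Matrix.of_apply, Matrix.submatrix_apply]
          rw [hBmdef, hBkdef]
          simp only [Matrix.of_apply]
          rw [if_pos (p.2.trans q.2.symm), he p, he q]
        have hBkrow : ∀ i : {v : Fin n // v ∈ σ ∩ τ k},
            ∑ j : {v : Fin n // v ∈ σ ∩ τ k}, Bk i j * x j.1 = u := by
          intro i
          have h1 : ∑ j : {v : Fin n // v ∈ σ ∩ τ k}, Bk i j * x j.1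
              = ∑ j ∈ σ ∩ τ k, (((if i.1 = j then (1:ℝ) else 0) - W i.1 j) - (1 - ε)) * x j := by
            rw [hBkdef, Finset.univ_eq_attach]
            exact Finset.sum_attach (σ ∩ τ k)
              (fun j => (((if i.1 = j then (1:ℝ) else 0) - W i.1 j) - (1 - ε)) * x j)
          rw [h1]
          exact hcommon k i.1 i.2
        have hxsumk : ∑ j : {v : Fin n // v ∈ σ ∩ τ k}, x j.1 = Sk k := by
          rw [Finset.univ_eq_attach, hSkdef]
          exact Finset.sum_attach (σ ∩ τ k) x
        have hscalk : u + (1 - ε) * ∑ j : {v : Fin n // v ∈ σ ∩ τ k}, x j.1 = θk k := by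
          rw [hxsumk, hu, hθkdef k]; ring
        have hxa : 0 < x a := (hsupp a).mpr haσ
        have hdet2 := CliqueAux.det_rank_one (⟨a, ha⟩ : {v : Fin n // v ∈ σ ∩ τ k}) Bk
          (fun j => x j.1) (1 - ε) u hxa.ne'
          (by rw [hscalk]; exact (hθkpos k).ne') hBkrow
        rw [hscalk] at hdet2
        have hAk : (Matrix.of fun i j : {v : Fin n // v ∈ σ ∩ τ k} => Bk i j + (1 - ε))
            = (1 : Matrix {v : Fin n // v ∈ σ ∩ τ k} {v : Fin n // v ∈ σ ∩ τ k} ℝ)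
              - W.submatrix Subtype.val Subtype.val := by
          rw [hBkdef]
          ext i j
          simp only [Matrix.of_apply, Matrix.sub_apply, Matrix.submatrix_apply]
          by_cases h : i = j
          · subst h
            rw [Matrix.one_apply_eq, if_pos rfl]
            ring
          · rw [Matrix.one_apply_ne h, if_neg (fun hv => h (Subtype.ext hv))]
            ring
        have hdetIWk : detIW W (σ ∩ τ k)
            = ((1 : Matrix {v : Fin n // v ∈ σ ∩ τ k} {v : Fin n // v ∈ σ ∩ τ k} ℝ)
              - W.submatrix Subtype.val Subtype.val).det := rfl
        rw [hdetIWk, ← hAk, hsq, Matrix.det_submatrix_equiv_self]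
        exact hdet2
      -- assemble the signs
      have step1 : Real.sign (detIW W σ) = Real.sign Bm.det := by
        rw [hdetIW, ← CliqueAux.sign_cmul hupos, hdet1, CliqueAux.sign_cmul hθ]
      have step2 : Real.sign Bm.det
          = ∏ k : Fin N, Real.sign ((Bm.toSquareBlock (fun i => κ i.1) k).det) := by
        rw [hdetBm, CliqueAux.sign_prod]
      have step3 : ∀ k : Fin N, Real.sign ((Bm.toSquareBlock (fun i => κ i.1) k).det)
          = Real.sign (detIW W (σ ∩ τ k)) := by
        intro k
        rw [← CliqueAux.sign_cmul (hθkpos k), ← hblock k, CliqueAux.sign_cmul hupos]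
      rw [step1, step2]
      exact Finset.prod_congr rfl fun k _ => step3 k
  exact ⟨⟨fun h => (hmain h).1, hbackward⟩, fun h => (hmain h).2⟩
end
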